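/- arXiv:2009.12086 — 6 statements merged into one kernel-verified Lean document; each statement's English description precedes it below -/
import Mathlib

section
/- Let He_n denote the probabilists' Hermite polynomials and Q_n(x) = He_n(x)/√(n!) the normalized Hermite polynomials. Let e : ℕ → [0,∞) be a sequence with sup_{n≥1} n·e_n < ∞. Then the series Σ_{n=0}^∞ e_n Q_n(x) Q_n(y) converges absolutely for every fixed x, y ∈ ℝ, and the convergence is uniform for (x,y) ranging over compact subsets of ℝ². -/
open Polynomial

/-- The normalized probabilists' Hermite polynomials `Qₙ(x) = Heₙ(x)/√(n!)`,
orthonormal with respect to the standard Gaussian density. -/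
noncomputable def normHermite (n : ℕ) (x : ℝ) : ℝ :=
  (Polynomial.aeval x (Polynomial.hermite n)) / Real.sqrt (Nat.factorial n)

theorem derivative_hermite' (n : ℕ) :
    derivative (hermite (n+1)) = C ((n:ℤ)+1) * hermite n := by
  induction n with
  | zero => simp [hermite_one, hermite_zero]
  | succ n ih =>
    rw [hermite_succ (n+1), derivative_sub, derivative_mul, derivative_X, one_mul, ih,
      derivative_mul, derivative_C, zero_mul, zero_add, hermite_succ n]
    simp only [C_add, C_1, map_ofNat, Nat.cast_add, Nat.cast_one]
    ring

theorem aeval_hermite_rec (n : ℕ) (x : ℝ) :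
    aeval x (hermite (n+2)) =
      x * aeval x (hermite (n+1)) - ((n:ℝ)+1) * aeval x (hermite n) := by
  rw [show n+2 = (n+1)+1 from rfl, hermite_succ, map_sub, map_mul, aeval_X,
    derivative_hermite', map_mul, aeval_C]
  push_cast
  ring

private lemma field_aux (x A B s t F : ℝ) (hs : s ≠ 0) (ht : t ≠ 0) (hF : F ≠ 0) :
    (x*B - (s*s)*A)/(t*(s*F)) = (x*(B/(s*F)) - s*(A/F))/t := by
  field_simp

theorem normHermite_rec (n : ℕ) (x : ℝ) :
    normHermite (n+2) x =
      (x * normHermite (n+1) x - Real.sqrt ((n:ℝ)+1) * normHermite n x) / Real.sqrt ((n:ℝ)+2) := by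
  have h1 : (0:ℝ) < Real.sqrt (Nat.factorial n) := Real.sqrt_pos.2 (by positivity)
  have h2 : (0:ℝ) < Real.sqrt ((n:ℝ)+1) := Real.sqrt_pos.2 (by positivity)
  have h3 : (0:ℝ) < Real.sqrt ((n:ℝ)+2) := Real.sqrt_pos.2 (by positivity)
  have hs2 : Real.sqrt ((n:ℝ)+1) * Real.sqrt ((n:ℝ)+1) = (n:ℝ)+1 :=
    Real.mul_self_sqrt (by positivity)
  have hf1 : (Real.sqrt (Nat.factorial (n+1)) : ℝ)
      = Real.sqrt ((n:ℝ)+1) * Real.sqrt (Nat.factorial n) := by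
    rw [← Real.sqrt_mul (by positivity)]
    congr 1
    rw [Nat.factorial_succ]
    push_cast; ring
  have hf2 : (Real.sqrt (Nat.factorial (n+2)) : ℝ)
      = Real.sqrt ((n:ℝ)+2) * Real.sqrt (Nat.factorial (n+1)) := by
    rw [← Real.sqrt_mul (by positivity)]
    congr 1
    rw [show n+2 = (n+1)+1 from rfl, Nat.factorial_succ]
    push_cast; ring
  unfold normHermite
  rw [aeval_hermite_rec, hf2, hf1,
    show ((n:ℝ)+1) * (aeval x (hermite n))
      = (Real.sqrt ((n:ℝ)+1) * Real.sqrt ((n:ℝ)+1)) * aeval x (hermite n) by rw [hs2]]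
  exact field_aux x _ _ _ _ _ h2.ne' h3.ne' h1.ne'

noncomputable def hermV (n : ℕ) (x : ℝ) : ℝ :=
  (normHermite (n+1) x)^2 + (normHermite n x)^2
    - x / Real.sqrt ((n:ℝ)+1) * (normHermite (n+1) x * normHermite n x)

noncomputable def hermU (n : ℕ) (x : ℝ) : ℝ :=
  (normHermite (n+1) x)^2 + (normHermite n x)^2

private lemma Vaux (x a b s t : ℝ) (hs : s ≠ 0) (ht : t ≠ 0) (hst : t*t = s*s + 1) :
    (((x*b - s*a)/t)^2 + b^2 - x/t*(((x*b - s*a)/t)*b))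
      = (b^2 + a^2 - x/s*(b*a)) - a^2/(t*t) + x*(b*a)/(s*(t*t)) := by
  field_simp
  linear_combination (x*b*a - s*a^2) * hst

theorem hermV_succ (n : ℕ) (x : ℝ) :
    hermV (n+1) x = hermV n x - (normHermite n x)^2/((n:ℝ)+2)
      + x * (normHermite (n+1) x * normHermite n x) / (Real.sqrt ((n:ℝ)+1) * ((n:ℝ)+2)) := by
  have h2 : (0:ℝ) < Real.sqrt ((n:ℝ)+1) := Real.sqrt_pos.2 (by positivity)
  have h3 : (0:ℝ) < Real.sqrt ((n:ℝ)+2) := Real.sqrt_pos.2 (by positivity)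
  have hs2 : Real.sqrt ((n:ℝ)+1) * Real.sqrt ((n:ℝ)+1) = (n:ℝ)+1 :=
    Real.mul_self_sqrt (by positivity)
  have ht2 : Real.sqrt ((n:ℝ)+2) * Real.sqrt ((n:ℝ)+2) = (n:ℝ)+2 :=
    Real.mul_self_sqrt (by positivity)
  have hcast : ((n+1:ℕ):ℝ) + 1 = (n:ℝ) + 2 := by push_cast; ring
  unfold hermV
  rw [normHermite_rec, hcast]
  have := Vaux x (normHermite n x) (normHermite (n+1) x)
    (Real.sqrt ((n:ℝ)+1)) (Real.sqrt ((n:ℝ)+2)) h2.ne' h3.ne' (by rw [hs2, ht2]; ring)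
  rw [ht2] at this
  linarith [this]

lemma sqrt_ge {R : ℝ} {n : ℕ} (hR : 1 ≤ R) (hn : 1024*R^2 ≤ (n:ℝ)) :
    32*R ≤ Real.sqrt ((n:ℝ)+1) := by
  have h : (32*R)^2 ≤ (n:ℝ)+1 := by nlinarith
  calc 32*R = Real.sqrt ((32*R)^2) := (Real.sqrt_sq (by positivity)).symm
    _ ≤ _ := Real.sqrt_le_sqrt h

lemma cross_bound {x s : ℝ} (a b : ℝ) (hs : 0 < s) (h32 : 32*|x| ≤ s) :
    |x/s*(b*a)| ≤ (b^2+a^2)/64 := by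
  have h1 : |x / s * (b * a)| = (|x|/s) * |b*a| := by
    rw [abs_mul, abs_div, abs_of_pos hs]
  have h2 : |b*a| ≤ (b^2 + a^2)/2 := by
    rw [abs_mul]
    nlinarith [sq_nonneg (|b| - |a|), sq_abs a, sq_abs b]
  have h3 : |x|/s ≤ 1/32 := by
    rw [div_le_iff₀ hs]; linarith
  calc |x/s*(b*a)| = (|x|/s) * |b*a| := h1
    _ ≤ (1/32) * ((b^2+a^2)/2) := mul_le_mul h3 h2 (abs_nonneg _) (by norm_num)
    _ = (b^2+a^2)/64 := by ring

lemma hermU_nonneg (n : ℕ) (x : ℝ) : 0 ≤ hermU n x := by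
  unfold hermU; positivity

lemma h32' {R x : ℝ} {n : ℕ} (hR : 1 ≤ R) (hx : |x| ≤ R) (hn : 1024*R^2 ≤ (n:ℝ)) :
    32*|x| ≤ Real.sqrt ((n:ℝ)+1) := by
  have := sqrt_ge hR hn
  nlinarith [abs_nonneg x]

lemma hermV_bounds {R x : ℝ} {n : ℕ} (hR : 1 ≤ R) (hx : |x| ≤ R) (hn : 1024*R^2 ≤ (n:ℝ)) :
    (3/4)*hermU n x ≤ hermV n x ∧ hermV n x ≤ (5/4)*hermU n x := by
  have hs : (0:ℝ) < Real.sqrt ((n:ℝ)+1) := Real.sqrt_pos.2 (by positivity)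
  have cb := cross_bound (normHermite n x) (normHermite (n+1) x) hs (h32' hR hx hn)
  obtain ⟨c1, c2⟩ := abs_le.mp cb
  have hU := hermU_nonneg n x
  unfold hermV hermU at *
  constructor <;> nlinarith

lemma step1 {R x : ℝ} {n : ℕ} (hR : 1 ≤ R) (hx : |x| ≤ R) (hn : 1024*R^2 ≤ (n:ℝ)) :
    ((n:ℝ)+2) * hermV (n+1) x ≤ ((n:ℝ)+2) * hermV n x - (normHermite n x)^2 + hermU n x / 64 := by
  have hs : (0:ℝ) < Real.sqrt ((n:ℝ)+1) := Real.sqrt_pos.2 (by positivity)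
  have hn2 : (0:ℝ) < (n:ℝ)+2 := by positivity
  have e1 : ((n:ℝ)+2) * hermV (n+1) x = ((n:ℝ)+2)*hermV n x - (normHermite n x)^2
      + x/(Real.sqrt ((n:ℝ)+1))*(normHermite (n+1) x * normHermite n x) := by
    rw [hermV_succ]
    field_simp
  have cb := cross_bound (normHermite n x) (normHermite (n+1) x) hs (h32' hR hx hn)
  have cb' := (le_abs_self _).trans cb
  have hUe : hermU n x = (normHermite (n+1) x)^2 + (normHermite n x)^2 := rfl
  linarith

lemma step2 {R x : ℝ} {n : ℕ} (hR : 1 ≤ R) (hx : |x| ≤ R) (hn : 1024*R^2 ≤ (n:ℝ)) :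
    hermU (n+1) x ≤ 3 * hermU n x := by
  have hs2 : (Real.sqrt ((n:ℝ)+1))^2 = (n:ℝ)+1 := Real.sq_sqrt (by positivity)
  have ht2 : (Real.sqrt ((n:ℝ)+2))^2 = (n:ℝ)+2 := Real.sq_sqrt (by positivity)
  have ht : (0:ℝ) < Real.sqrt ((n:ℝ)+2) := Real.sqrt_pos.2 (by positivity)
  have hx2 : x^2 ≤ R^2 := by nlinarith [abs_nonneg x, sq_abs x]
  set a := normHermite n x
  set b := normHermite (n+1) x
  have hrec : normHermite (n+2) x
      = (x * b - Real.sqrt ((n:ℝ)+1) * a) / Real.sqrt ((n:ℝ)+2) := normHermite_rec n x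
  have hc2 : (normHermite (n+2) x)^2 * ((n:ℝ)+2)
      = (x * b - Real.sqrt ((n:ℝ)+1) * a)^2 := by
    rw [hrec, div_pow, ht2, div_mul_cancel₀]
    positivity
  have key : (normHermite (n+2) x)^2 ≤ 2*(b^2+a^2) := by
    nlinarith [sq_nonneg (x*b + Real.sqrt ((n:ℝ)+1)*a), sq_nonneg b, sq_nonneg a, hR]
  have hU1 : hermU (n+1) x = (normHermite (n+2) x)^2 + b^2 := rfl
  have hU0 : hermU n x = b^2 + a^2 := rfl
  nlinarith [sq_nonneg a, sq_nonneg b]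

lemma step3 {R x : ℝ} {n : ℕ} (hR : 1 ≤ R) (hx : |x| ≤ R) (hn : 1024*R^2 ≤ (n:ℝ)) :
    hermV (n+2) x ≤ (1 - 2/(5*((n:ℝ)+2))) * hermV n x := by
  have hn' : 1024*R^2 ≤ ((n+1:ℕ):ℝ) := by push_cast; linarith
  have h1 := step1 hR hx hn
  have h2 := step1 hR hx hn'
  have h4 := step2 hR hx hn
  obtain ⟨hV0l, hV0u⟩ := hermV_bounds hR hx hn
  have hu0 := hermU_nonneg n x
  have hV0nn : 0 ≤ hermV n x := by linarith
  have hm : (0:ℝ) ≤ (n:ℝ) := Nat.cast_nonneg n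
  have hm1024 : (1024:ℝ) ≤ (n:ℝ) := by nlinarith
  push_cast at h2
  rw [show n+1+1 = n+2 from rfl] at h2
  rw [show ((n:ℝ)+1+2) = (n:ℝ)+3 by ring] at h2
  have hUe : hermU n x = (normHermite (n+1) x)^2 + (normHermite n x)^2 := rfl
  have hn2 : (0:ℝ) < (n:ℝ)+2 := by positivity
  have hn3 : (0:ℝ) < (n:ℝ)+3 := by positivity
  -- multiplied versions
  have k1 := mul_le_mul_of_nonneg_left h1 (le_of_lt hn3)
  have k2 := mul_le_mul_of_nonneg_left h2 (le_of_lt hn2)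
  have k4 := mul_le_mul_of_nonneg_left h4 (le_of_lt hn2)
  have k5 := mul_le_mul_of_nonneg_left hV0u (le_of_lt hn2)
  have k6 : 0 ≤ (n:ℝ) * hermU n x := mul_nonneg hm hu0
  have k7 : 0 ≤ ((n:ℝ) - 1024) * hermV n x := mul_nonneg (by linarith) hV0nn
  have k8 : (n:ℝ) * hermU n x
      = (n:ℝ) * ((normHermite (n+1) x)^2 + (normHermite n x)^2) := by rw [hUe]
  have key : 5*((n:ℝ)+2)*(((n:ℝ)+3) * hermV (n+2) x)
      ≤ (5*((n:ℝ)+2) - 2)*(((n:ℝ)+3) * hermV n x) := by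
    linarith [k1, k2, k4, k5, k6, k7, k8, hV0u, hu0, hUe, sq_nonneg (normHermite n x),
      sq_nonneg (normHermite (n+1) x)]
  have key2 : (5*((n:ℝ)+2)*hermV (n+2) x) * ((n:ℝ)+3)
      ≤ ((5*((n:ℝ)+2) - 2)*hermV n x) * ((n:ℝ)+3) := by linarith [key]
  have key3 := le_of_mul_le_mul_right key2 hn3
  have h52 : (0:ℝ) < 5*((n:ℝ)+2) := by positivity
  rw [show (1 - 2/(5*((n:ℝ)+2))) * hermV n x
      = ((5*((n:ℝ)+2) - 2)*hermV n x)/(5*((n:ℝ)+2)) by field_simp,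
    le_div_iff₀ h52]
  linarith [key3]

lemma continuous_normHermite (n : ℕ) : Continuous fun x : ℝ => normHermite n x :=
  (Polynomial.continuous_aeval (hermite n)).div_const _

lemma continuous_hermV (n : ℕ) : Continuous fun x : ℝ => hermV n x := by
  have h1 := continuous_normHermite (n+1)
  have h0 := continuous_normHermite n
  unfold hermV
  exact ((h1.pow 2).add (h0.pow 2)).sub
    ((continuous_id.div_const _).mul (h1.mul h0))

lemma master (e : ℕ → ℝ) (he0 : ∀ n, 0 ≤ e n) (C : ℝ)
    (hC : ∀ n : ℕ, 1 ≤ n → (n : ℝ) * e n ≤ C) (R : ℝ) (hR : 1 ≤ R) :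
    ∃ M : ℕ → ℝ, Summable M ∧
      ∀ n, ∀ x y : ℝ, |x| ≤ R → |y| ≤ R → |e n * normHermite n x * normHermite n y| ≤ M n := by
  have hC0 : 0 ≤ C := by have h := hC 1 le_rfl; have := he0 1; push_cast at h; linarith
  set I : Set ℝ := Set.Icc (-R) R with hI
  have hIc : IsCompact I := isCompact_Icc
  have hIne : I.Nonempty := ⟨0, by simp only [hI, Set.mem_Icc]; constructor <;> linarith⟩
  have hmemI : ∀ x : ℝ, |x| ≤ R → x ∈ I := fun x hx => by
    obtain ⟨h1, h2⟩ := abs_le.mp hx; exact ⟨h1, h2⟩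
  set N : ℕ := ⌈1024 * R^2⌉₊ with hNdef
  have hN : ∀ n : ℕ, N ≤ n → 1024*R^2 ≤ (n:ℝ) := fun n hn =>
    le_trans (Nat.le_ceil _) (by exact_mod_cast hn)
  set W : ℕ → ℝ := fun n => sSup ((fun x => hermV n x) '' I) with hWdef
  have hbdd : ∀ n, BddAbove ((fun x => hermV n x) '' I) := fun n =>
    hIc.bddAbove_image (continuous_hermV n).continuousOn
  have hWle : ∀ n, ∀ x ∈ I, hermV n x ≤ W n := fun n x hx =>
    le_csSup (hbdd n) ⟨x, hx, rfl⟩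
  have hVnn : ∀ n, N ≤ n → ∀ x ∈ I, 0 ≤ hermV n x := by
    intro n hn x hx
    have hxR : |x| ≤ R := abs_le.mpr ⟨hx.1, hx.2⟩
    have := (hermV_bounds hR hxR (hN n hn)).1
    have := hermU_nonneg n x
    linarith
  have h0I : (0:ℝ) ∈ I := by simp only [hI, Set.mem_Icc]; constructor <;> linarith
  have hW0 : ∀ n, N ≤ n → 0 ≤ W n := fun n hn =>
    le_trans (hVnn n hn 0 h0I) (hWle n 0 h0I)
  have hWrec : ∀ n, N ≤ n → W (n+2) ≤ (1 - 2/(5*((n:ℝ)+2))) * W n := by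
    intro n hn
    apply csSup_le (hIne.image _)
    rintro v ⟨x, hx, rfl⟩
    have hxR : |x| ≤ R := abs_le.mpr ⟨hx.1, hx.2⟩
    have hcoef : 0 ≤ 1 - 2/(5*((n:ℝ)+2)) := by
      have hpos : (0:ℝ) < 5*((n:ℝ)+2) := by positivity
      rw [sub_nonneg, div_le_one hpos]
      have : (0:ℝ) ≤ (n:ℝ) := Nat.cast_nonneg n
      linarith
    exact (step3 hR hxR (hN n hn)).trans (mul_le_mul_of_nonneg_left (hWle n x hx) hcoef)
  set Z : ℕ → ℝ := fun n => W n + W (n+1) with hZdef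
  have hZrec : ∀ k : ℕ, (2/(5*((N+k:ℕ):ℝ)+10)) * W (N+k) ≤ Z (N+k) - Z (N+k+1) := by
    intro k
    have h := hWrec (N+k) (Nat.le_add_right N k)
    have e1 : Z (N+k) - Z (N+k+1) = W (N+k) - W (N+k+2) := by
      simp only [hZdef]
      ring_nf
    rw [e1, show 5*((N+k:ℕ):ℝ)+10 = 5*(((N+k:ℕ):ℝ)+2) by ring]
    have e2 : (1 - 2/(5*(((N+k:ℕ):ℝ)+2))) * W (N+k)
        = W (N+k) - 2/(5*(((N+k:ℕ):ℝ)+2)) * W (N+k) := by ring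
    rw [e2] at h
    linarith
  have hcnn : ∀ k : ℕ, 0 ≤ (2/(5*((N+k:ℕ):ℝ)+10)) * W (N+k) := fun k =>
    mul_nonneg (by positivity) (hW0 _ (Nat.le_add_right N k))
  have hZnn : ∀ k : ℕ, 0 ≤ Z (N+k) := fun k =>
    add_nonneg (hW0 _ (Nat.le_add_right N k)) (hW0 _ (by omega))
  have hsumc : Summable (fun k : ℕ => (2/(5*((N+k:ℕ):ℝ)+10)) * W (N+k)) := by
    apply summable_of_sum_range_le hcnn
    intro K
    calc ∑ k ∈ Finset.range K, (2/(5*((N+k:ℕ):ℝ)+10)) * W (N+k)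
        ≤ ∑ k ∈ Finset.range K, (Z (N+k) - Z (N+(k+1))) :=
          Finset.sum_le_sum (fun k _ => hZrec k)
      _ = Z (N+0) - Z (N+K) := Finset.sum_range_sub' (fun k => Z (N+k)) K
      _ ≤ Z N := by have := hZnn K; simp only [Nat.add_zero]; linarith
  set D : ℕ → ℝ := fun n => sSup ((fun x => (normHermite n x)^2) '' I) with hDdef
  have hDbdd : ∀ n, BddAbove ((fun x => (normHermite n x)^2) '' I) := fun n =>
    hIc.bddAbove_image ((continuous_normHermite n).pow 2).continuousOn
  have hDle : ∀ n, ∀ x ∈ I, (normHermite n x)^2 ≤ D n := fun n x hx =>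
    le_csSup (hDbdd n) ⟨x, hx, rfl⟩
  refine ⟨fun n => if n < N+1 then e n * D n else e n * ((4/3) * W (n-1)), ?_, ?_⟩
  · rw [← summable_nat_add_iff (N+1)]
    apply Summable.of_nonneg_of_le ?_ ?_ (hsumc.mul_left (20*C/3))
    · intro k
      simp only [if_neg (by omega : ¬ (k+(N+1) < N+1))]
      have hWk : 0 ≤ W (k+(N+1)-1) := by
        rw [show k+(N+1)-1 = N+k by omega]; exact hW0 _ (Nat.le_add_right N k)
      exact mul_nonneg (he0 _) (mul_nonneg (by norm_num) hWk)
    · intro k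
      simp only [if_neg (by omega : ¬ (k+(N+1) < N+1)), show k+(N+1)-1 = N+k by omega]
      have hWk : 0 ≤ W (N+k) := hW0 _ (Nat.le_add_right N k)
      have h2 := hC (k+(N+1)) (by omega)
      push_cast at h2
      have hDpos : (0:ℝ) < 5*((N+k:ℕ):ℝ)+10 := by positivity
      rw [show (20*C/3) * (2/(5*((N+k:ℕ):ℝ)+10) * W (N+k))
          = ((40*C/3) * W (N+k))/(5*((N+k:ℕ):ℝ)+10) by ring, le_div_iff₀ hDpos]
      have key : e (k+(N+1)) * (5*((N+k:ℕ):ℝ)+10) ≤ 10*C := by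
        push_cast
        nlinarith [he0 (k+(N+1)), hC0, Nat.cast_nonneg (α := ℝ) k, Nat.cast_nonneg (α := ℝ) N]
      nlinarith [mul_le_mul_of_nonneg_right key hWk, hC0, hWk]
  · intro n x y hx hy
    have hxI := hmemI x hx
    have hyI := hmemI y hy
    have habs : |e n * normHermite n x * normHermite n y|
        = e n * (|normHermite n x| * |normHermite n y|) := by
      rw [abs_mul, abs_mul, abs_of_nonneg (he0 n)]; ring
    simp only []
    by_cases hsm : n < N+1
    · beta_reduce
      rw [if_pos hsm, habs]
      apply mul_le_mul_of_nonneg_left ?_ (he0 n)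
      have h1 := hDle n x hxI
      have h2 := hDle n y hyI
      nlinarith [sq_nonneg (|normHermite n x| - |normHermite n y|),
        sq_abs (normHermite n x), sq_abs (normHermite n y), abs_nonneg (normHermite n x),
        abs_nonneg (normHermite n y)]
    · beta_reduce
      rw [if_neg hsm, habs]
      apply mul_le_mul_of_nonneg_left ?_ (he0 n)
      obtain ⟨m, rfl⟩ : ∃ m, n = m+1 := ⟨n-1, by omega⟩
      have hmN : N ≤ m := by omega
      simp only [Nat.add_sub_cancel]
      have hbx := (hermV_bounds hR hx (hN m hmN)).1
      have hby := (hermV_bounds hR hy (hN m hmN)).1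
      have hWx := hWle m x hxI
      have hWy := hWle m y hyI
      have hux : (normHermite (m+1) x)^2 ≤ hermU m x := by
        unfold hermU; nlinarith [sq_nonneg (normHermite m x)]
      have huy : (normHermite (m+1) y)^2 ≤ hermU m y := by
        unfold hermU; nlinarith [sq_nonneg (normHermite m y)]
      nlinarith [sq_nonneg (|normHermite (m+1) x| - |normHermite (m+1) y|),
        sq_abs (normHermite (m+1) x), sq_abs (normHermite (m+1) y), hbx, hby, hWx, hWy,
        hux, huy, abs_nonneg (normHermite (m+1) x), abs_nonneg (normHermite (m+1) y)]

/-- **Convergence of Hermite bilinear series.**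
If `e : ℕ → [0,∞)` satisfies `sup_{n ≥ 1} n · eₙ < ∞`, then the series
`Σₙ eₙ Qₙ(x) Qₙ(y)` converges absolutely for every fixed `x, y ∈ ℝ`, and the
convergence is uniform on compact subsets of `ℝ²`. -/
theorem stmt2 (e : ℕ → ℝ) (he0 : ∀ n, 0 ≤ e n)
    (hbd : ∃ C : ℝ, ∀ n : ℕ, 1 ≤ n → (n : ℝ) * e n ≤ C) :
    (∀ x y : ℝ, Summable fun n => |e n * normHermite n x * normHermite n y|) ∧
    ∀ K : Set (ℝ × ℝ), IsCompact K →
      TendstoUniformlyOn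
        (fun (N : ℕ) (q : ℝ × ℝ) =>
          ∑ n ∈ Finset.range N, e n * normHermite n q.1 * normHermite n q.2)
        (fun q => ∑' n : ℕ, e n * normHermite n q.1 * normHermite n q.2)
        Filter.atTop K := by
  obtain ⟨C, hC⟩ := hbd
  constructor
  · intro x y
    obtain ⟨M, hMs, hMb⟩ := master e he0 C hC (max (max |x| |y|) 1) (le_max_right _ _)
    exact hMs.of_nonneg_of_le (fun n => abs_nonneg _)
      (fun n => hMb n x y (le_max_of_le_left (le_max_left _ _))
        (le_max_of_le_left (le_max_right _ _)))
  · intro K hK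
    obtain ⟨r, hr⟩ := hK.isBounded.subset_closedBall 0
    obtain ⟨M, hMs, hMb⟩ := master e he0 C hC (max r 1) (le_max_right _ _)
    apply tendstoUniformlyOn_tsum_nat hMs
    intro n q hq
    have hqn : ‖q‖ ≤ r := by
      have := hr hq
      rwa [Metric.mem_closedBall, dist_zero_right] at this
    have h1 : |q.1| ≤ max r 1 := by
      refine le_max_of_le_left ?_
      calc |q.1| = ‖q.1‖ := (Real.norm_eq_abs q.1).symm
        _ ≤ ‖q‖ := norm_fst_le q
        _ ≤ r := hqn
    have h2 : |q.2| ≤ max r 1 := by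
      refine le_max_of_le_left ?_
      calc |q.2| = ‖q.2‖ := (Real.norm_eq_abs q.2).symm
        _ ≤ ‖q‖ := norm_snd_le q
        _ ≤ r := hqn
    rw [Real.norm_eq_abs]
    exact hMb n q.1 q.2 h1 h2
end

section
/- Let X be a Banach space and (T(t))_{t≥0} a uniformly bounded strongly continuous semigroup of bounded linear operators on X with sup_{t≥0} ‖T(t)‖ ≤ M. Let f : (0,∞) × (0,∞) → [0,∞) be jointly measurable such that for each t > 0 the function s ↦ f(s,t) is a probability density on (0,∞); assume moreover that for every bounded continuous h : [0,∞) → ℝ the map t ↦ ∫₀^∞ h(s) f(s,t) ds is continuous on (0,∞) and tends to h(0) as t → 0⁺. Define T_Φ(t)u = ∫₀^∞ T(s)u f(s,t) ds (Bochner integral) for t > 0 and T_Φ(0)u = u. Then for every u ∈ X the Bochner integral exists, ‖T_Φ(t)u‖ ≤ M‖u‖ for all t ≥ 0, and the map t ↦ T_Φ(t)u is continuous from [0,∞) to X. -/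
open MeasureTheory Set Filter

lemma hatSum_eq_one : ∀ (n : ℕ) (r : ℝ), 0 ≤ r → r ≤ n →
    ∑ i ∈ Finset.range (n+1), max 0 (1 - |r - (i:ℝ)|) = 1 := by
  intro n
  induction n with
  | zero =>
    intro r h0 h1
    have hr : r = 0 := le_antisymm (by exact_mod_cast h1) h0
    simp [hr]
  | succ n ih =>
    intro r h0 h1
    rw [Finset.sum_range_succ]
    by_cases hr : r ≤ n
    · rw [ih r h0 hr]
      have h2 : max 0 (1 - |r - ((n+1:ℕ):ℝ)|) = 0 := by
        apply max_eq_left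
        have : |r - ((n+1:ℕ):ℝ)| = ((n+1:ℕ):ℝ) - r := by
          rw [abs_sub_comm, abs_of_nonneg (by push_cast; linarith)]
        rw [this]; push_cast; linarith
      rw [h2]; ring
    · push_neg at hr
      rw [Finset.sum_range_succ]
      have hz : ∑ i ∈ Finset.range n, max 0 (1 - |r - (i:ℝ)|) = 0 := by
        apply Finset.sum_eq_zero
        intro i hi
        have hi' : (i:ℝ) ≤ (n:ℝ) - 1 := by
          have := Finset.mem_range.mp hi
          have : (i:ℝ) + 1 ≤ (n:ℝ) := by exact_mod_cast this
          linarith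
        apply max_eq_left
        have habs : |r - (i:ℝ)| = r - i := abs_of_nonneg (by linarith)
        rw [habs]; linarith
      have h1' : r ≤ (n:ℝ) + 1 := by push_cast at h1 ⊢; linarith
      have ha : max 0 (1 - |r - (n:ℝ)|) = 1 - (r - n) := by
        rw [abs_of_nonneg (by linarith)]
        exact max_eq_right (by linarith)
      have hb : max 0 (1 - |r - ((n+1:ℕ):ℝ)|) = 1 - (((n:ℝ)+1) - r) := by
        have : |r - ((n+1:ℕ):ℝ)| = ((n:ℝ)+1) - r := by
          rw [abs_sub_comm, abs_of_nonneg (by push_cast; linarith)]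
          push_cast; ring
        rw [this]
        exact max_eq_right (by linarith)
      rw [hz, ha, hb]; ring

lemma hatSum_le_one (n : ℕ) (r : ℝ) (h0 : 0 ≤ r) :
    ∑ i ∈ Finset.range (n+1), max 0 (1 - |r - (i:ℝ)|) ≤ 1 := by
  by_cases hr : r ≤ n
  · exact le_of_eq (hatSum_eq_one n r h0 hr)
  · push_neg at hr
    rw [Finset.sum_range_succ]
    have hz : ∑ i ∈ Finset.range n, max 0 (1 - |r - (i:ℝ)|) = 0 := by
      apply Finset.sum_eq_zero
      intro i hi
      have : (i:ℝ) + 1 ≤ (n:ℝ) := by exact_mod_cast Finset.mem_range.mp hi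
      apply max_eq_left
      have habs : |r - (i:ℝ)| = r - i := abs_of_nonneg (by linarith)
      rw [habs]; linarith
    rw [hz, zero_add]
    apply max_le (by norm_num)
    have : (0:ℝ) ≤ |r - (n:ℝ)| := abs_nonneg _
    linarith

set_option maxHeartbeats 1000000 in
/-- **Uniform boundedness and strong continuity of the subordinated family.**
Let `(T(t))_{t ≥ 0}` be a uniformly bounded strongly continuous semigroup on a Banach
space `X` with `‖T(t)‖ ≤ M`, and let `f(·,t)` be a family of probability densities on
`(0,∞)` that varies weakly continuously in `t > 0` and converges weakly to `δ₀` as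
`t → 0⁺`. Define `T_Φ(t)u = ∫₀^∞ T(s)u f(s,t) ds` (Bochner) for `t > 0` and
`T_Φ(0)u = u`. Then for every `u` the Bochner integral exists, `‖T_Φ(t)u‖ ≤ M‖u‖`
for all `t ≥ 0`, and `t ↦ T_Φ(t)u` is continuous on `[0,∞)`. -/
theorem stmt5
    {X : Type*} [NormedAddCommGroup X] [NormedSpace ℝ X] [CompleteSpace X]
    (T : ℝ → X →L[ℝ] X) (M : ℝ)
    (hT0 : T 0 = ContinuousLinearMap.id ℝ X)
    (hTsemi : ∀ s t : ℝ, 0 ≤ s → 0 ≤ t → T (s + t) = (T s).comp (T t))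
    (hTbd : ∀ t : ℝ, 0 ≤ t → ‖T t‖ ≤ M)
    (hTcont : ∀ u : X, ContinuousOn (fun t => T t u) (Set.Ici 0))
    (f : ℝ → ℝ → ℝ)
    (hfmeas : Measurable fun q : ℝ × ℝ => f q.1 q.2)
    (hf0 : ∀ s t : ℝ, 0 ≤ f s t)
    (hf1 : ∀ t : ℝ, 0 < t → ∫ s in Set.Ioi (0:ℝ), f s t = 1)
    (hweak : ∀ h : ℝ → ℝ, Continuous h → (∃ C, ∀ s : ℝ, 0 ≤ s → |h s| ≤ C) →
      ContinuousOn (fun t => ∫ s in Set.Ioi (0:ℝ), h s * f s t) (Set.Ioi 0) ∧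
      Tendsto (fun t => ∫ s in Set.Ioi (0:ℝ), h s * f s t)
        (nhdsWithin 0 (Set.Ioi 0)) (nhds (h 0))) :
    ∀ u : X, ∀ TΦ : ℝ → X,
      (∀ t : ℝ, 0 < t → TΦ t = ∫ s in Set.Ioi (0:ℝ), f s t • T s u) →
      TΦ 0 = u →
      (∀ t : ℝ, 0 < t →
        Integrable (fun s => f s t • T s u) (volume.restrict (Set.Ioi 0))) ∧
      (∀ t : ℝ, 0 ≤ t → ‖TΦ t‖ ≤ M * ‖u‖) ∧
      ContinuousOn TΦ (Set.Ici 0) := by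
  intro u TΦ hTΦ hTΦ0
  have hM0 : (0:ℝ) ≤ M := le_trans (norm_nonneg (T 0)) (hTbd 0 le_rfl)
  set K : ℝ := M * ‖u‖ with hKdef
  have hK0 : 0 ≤ K := mul_nonneg hM0 (norm_nonneg u)
  set g : ℝ → X := fun s => T (max s 0) u with hgdef
  have hg_cont : Continuous g :=
    (hTcont u).comp_continuous (continuous_id.max continuous_const)
      (fun s => Set.mem_Ici.mpr (le_max_right _ _))
  have hg_bd : ∀ s, ‖g s‖ ≤ K := by
    intro s
    calc ‖T (max s 0) u‖ ≤ ‖T (max s 0)‖ * ‖u‖ := (T _).le_opNorm u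
      _ ≤ M * ‖u‖ :=
        mul_le_mul_of_nonneg_right (hTbd _ (le_max_right _ _)) (norm_nonneg u)
  have hmeas_f : ∀ t, Measurable (fun s => f s t) := fun t =>
    hfmeas.comp (measurable_id.prodMk measurable_const)
  have hint_f : ∀ t : ℝ, 0 < t →
      Integrable (fun s => f s t) (volume.restrict (Set.Ioi 0)) := by
    intro t ht
    by_contra hcon
    have h1 := hf1 t ht
    rw [integral_undef hcon] at h1
    norm_num at h1
  have hint_fg : ∀ t : ℝ, 0 < t →
      Integrable (fun s => f s t • g s) (volume.restrict (Set.Ioi 0)) := by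
    intro t ht
    apply Integrable.mono' ((hint_f t ht).const_mul K)
      ((hmeas_f t).aestronglyMeasurable.smul hg_cont.aestronglyMeasurable)
    refine ae_of_all _ fun s => ?_
    simp only [Pi.smul_apply']; rw [norm_smul, Real.norm_eq_abs, abs_of_nonneg (hf0 s t)]
    calc f s t * ‖g s‖ ≤ f s t * K :=
        mul_le_mul_of_nonneg_left (hg_bd s) (hf0 s t)
      _ = K * f s t := mul_comm _ _
  have part1 : ∀ t : ℝ, 0 < t →
      Integrable (fun s => f s t • T s u) (volume.restrict (Set.Ioi 0)) := by
    intro t ht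
    apply (hint_fg t ht).congr
    filter_upwards [ae_restrict_mem measurableSet_Ioi] with s hs
    simp only [hgdef]
    rw [max_eq_left (le_of_lt hs)]
  have hTΦg : ∀ t : ℝ, 0 < t → TΦ t = ∫ s in Set.Ioi (0:ℝ), f s t • g s := by
    intro t ht
    rw [hTΦ t ht]
    apply setIntegral_congr_fun measurableSet_Ioi
    intro s hs
    simp only [hgdef]
    rw [max_eq_left (le_of_lt hs)]
  -- integrability of h * f for bounded continuous h
  have hint_hf : ∀ (h : ℝ → ℝ), Continuous h → (∀ s, |h s| ≤ 1) →
      ∀ t : ℝ, 0 < t →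
      Integrable (fun s => h s * f s t) (volume.restrict (Set.Ioi 0)) := by
    intro h hc hb t ht
    apply Integrable.mono' (hint_f t ht)
      (hc.aestronglyMeasurable.mul (hmeas_f t).aestronglyMeasurable)
    refine ae_of_all _ fun s => ?_
    simp only [Pi.mul_apply]
    rw [Real.norm_eq_abs, abs_mul, abs_of_nonneg (hf0 s t)]
    exact mul_le_of_le_one_left (hf0 s t) (hb s)
  have hint_hf_on : ∀ (h : ℝ → ℝ), Continuous h → (∀ s, |h s| ≤ 1) →
      ∀ t : ℝ, 0 < t →
      IntegrableOn (fun s => h s * f s t) (Set.Ioi 0) volume := hint_hf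
  have hint_f_on : ∀ t : ℝ, 0 < t →
      IntegrableOn (fun s => f s t) (Set.Ioi 0) volume := hint_f
  have part2 : ∀ t : ℝ, 0 ≤ t → ‖TΦ t‖ ≤ M * ‖u‖ := by
    intro t ht
    rcases eq_or_lt_of_le ht with h | h
    · rw [← h, hTΦ0]
      calc ‖u‖ = ‖T 0 u‖ := by rw [hT0]; rfl
        _ ≤ ‖T 0‖ * ‖u‖ := (T 0).le_opNorm u
        _ ≤ M * ‖u‖ :=
          mul_le_mul_of_nonneg_right (hTbd 0 le_rfl) (norm_nonneg u)
    · rw [hTΦg t h]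
      calc ‖∫ s in Set.Ioi (0:ℝ), f s t • g s‖
          ≤ ∫ s in Set.Ioi (0:ℝ), K * f s t := by
            apply norm_integral_le_of_norm_le ((hint_f t h).const_mul K)
            refine ae_of_all _ fun s => ?_
            rw [norm_smul, Real.norm_eq_abs, abs_of_nonneg (hf0 s t)]
            calc f s t * ‖g s‖ ≤ f s t * K :=
                mul_le_mul_of_nonneg_left (hg_bd s) (hf0 s t)
              _ = K * f s t := mul_comm _ _
        _ = K * ∫ s in Set.Ioi (0:ℝ), f s t := integral_const_mul K _
        _ = M * ‖u‖ := by rw [hf1 t h, mul_one]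
  refine ⟨part1, part2, ?_⟩
  -- continuity
  intro t₀ ht₀
  rcases eq_or_lt_of_le (mem_Ici.mp ht₀) with h0 | h0
  · -- t₀ = 0
    rw [ContinuousWithinAt, ← h0]
    rw [show Set.Ici (0:ℝ) = insert 0 (Set.Ioi 0) from (Set.Ioi_insert).symm,
      nhdsWithin_insert, tendsto_sup]
    refine ⟨tendsto_pure_nhds TΦ 0, ?_⟩
    rw [hTΦ0]
    -- squeeze via the weak convergence of ∫ ‖g s - u‖ f s t
    set h₀ : ℝ → ℝ := fun s => ‖g s - u‖ with hh₀
    have hh₀cont : Continuous h₀ := (hg_cont.sub continuous_const).norm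
    have hh₀bd : ∃ C, ∀ s : ℝ, 0 ≤ s → |h₀ s| ≤ C := by
      refine ⟨K + ‖u‖, fun s _ => ?_⟩
      rw [abs_of_nonneg (norm_nonneg _)]
      calc ‖g s - u‖ ≤ ‖g s‖ + ‖u‖ := norm_sub_le _ _
        _ ≤ K + ‖u‖ := add_le_add_left (hg_bd s) _
    have hh₀0 : h₀ 0 = 0 := by
      simp [hh₀, hgdef, hT0]
    have htend := (hweak h₀ hh₀cont hh₀bd).2
    rw [hh₀0] at htend
    have hbound : ∀ t ∈ Set.Ioi (0:ℝ),
        ‖TΦ t - u‖ ≤ ∫ s in Set.Ioi (0:ℝ), h₀ s * f s t := by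
      intro t ht
      have hu : u = ∫ s in Set.Ioi (0:ℝ), f s t • u := by
        rw [integral_smul_const, hf1 t ht, one_smul]
      rw [hTΦg t ht]
      calc ‖(∫ s in Set.Ioi (0:ℝ), f s t • g s) - u‖
          = ‖∫ s in Set.Ioi (0:ℝ), (f s t • g s - f s t • u)‖ := by
            rw [integral_sub (hint_fg t ht) ((hint_f t ht).smul_const u), ← hu]
        _ ≤ ∫ s in Set.Ioi (0:ℝ), h₀ s * f s t := by
            apply norm_integral_le_of_norm_le
            · apply Integrable.mono' ((hint_f t ht).const_mul (K + ‖u‖))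
                (hh₀cont.aestronglyMeasurable.mul
                  (hmeas_f t).aestronglyMeasurable)
              refine ae_of_all _ fun s => ?_
              simp only [Pi.mul_apply]
              rw [Real.norm_eq_abs, abs_mul, abs_of_nonneg (hf0 s t),
                abs_of_nonneg (norm_nonneg _)]
              apply mul_le_mul_of_nonneg_right _ (hf0 s t)
              calc ‖g s - u‖ ≤ ‖g s‖ + ‖u‖ := norm_sub_le _ _
                _ ≤ K + ‖u‖ := add_le_add_left (hg_bd s) _
            · refine ae_of_all _ fun s => ?_
              rw [← smul_sub, norm_smul, Real.norm_eq_abs,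
                abs_of_nonneg (hf0 s t), mul_comm]
    have hnorm : Tendsto (fun t => ‖TΦ t - u‖)
        (nhdsWithin 0 (Set.Ioi 0)) (nhds 0) := by
      apply squeeze_zero' ?_ ?_ htend
      · filter_upwards [self_mem_nhdsWithin] with t _ using norm_nonneg _
      · filter_upwards [self_mem_nhdsWithin] with t ht using hbound t ht
    exact tendsto_iff_norm_sub_tendsto_zero.mpr hnorm
  · -- t₀ > 0
    apply ContinuousAt.continuousWithinAt
    rw [ContinuousAt, Metric.tendsto_nhds]
    intro ε hε
    set ε₀ : ℝ := ε / (4 + 4 * K) with hε₀def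
    have hε₀pos : 0 < ε₀ := div_pos hε (by linarith)
    -- choose tail cutoff N
    obtain ⟨N, hN⟩ : ∃ N : ℕ, ∫ s in Set.Ioi ((N:ℝ)), f s t₀ < ε₀ := by
      have hmono : Monotone (fun n : ℕ => Set.Ioc (0:ℝ) n) := fun a b hab =>
        Set.Ioc_subset_Ioc le_rfl (by exact_mod_cast hab)
      have hunion : (⋃ n : ℕ, Set.Ioc (0:ℝ) n) = Set.Ioi 0 := by
        ext x
        simp only [Set.mem_iUnion, Set.mem_Ioc, Set.mem_Ioi]
        constructor
        · rintro ⟨n, h1, _⟩; exact h1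
        · intro hx
          obtain ⟨n, hn⟩ := exists_nat_gt x
          exact ⟨n, hx, hn.le⟩
      have htd := tendsto_setIntegral_of_monotone (fun n => measurableSet_Ioc)
        hmono (by rw [hunion]; exact hint_f t₀ h0)
      rw [hunion, hf1 t₀ h0] at htd
      have hev := htd.eventually (eventually_gt_nhds
        (show 1 - ε₀ < 1 by linarith))
      obtain ⟨n, hn⟩ := hev.exists
      refine ⟨n, ?_⟩
      have hsplit : (∫ s in Set.Ioc (0:ℝ) n, f s t₀)
          + ∫ s in Set.Ioi ((n:ℝ)), f s t₀ = 1 := by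
        rw [← setIntegral_union (Set.Ioc_disjoint_Ioi le_rfl) measurableSet_Ioi
          ((hint_f_on t₀ h0).mono_set Set.Ioc_subset_Ioi_self)
          ((hint_f_on t₀ h0).mono_set (Set.Ioi_subset_Ioi (Nat.cast_nonneg n))),
          Set.Ioc_union_Ioi_eq_Ioi (Nat.cast_nonneg n), hf1 t₀ h0]
      linarith
    set R : ℝ := (N:ℝ) + 1 with hRdef
    have hR0 : 0 ≤ R := by positivity
    set htail : ℝ → ℝ := fun s => min 1 (max 0 (s - N)) with htaildef
    have htailcont : Continuous htail :=
      continuous_const.min (continuous_const.max (continuous_id.sub continuous_const))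
    have htail01 : ∀ s, 0 ≤ htail s ∧ htail s ≤ 1 := fun s =>
      ⟨le_min zero_le_one (le_max_left _ _), min_le_left _ _⟩
    have htailbd : ∀ s, |htail s| ≤ 1 := fun s =>
      abs_le.mpr ⟨by linarith [(htail01 s).1], (htail01 s).2⟩
    set c : ℝ → ℝ := fun t => ∫ s in Set.Ioi (0:ℝ), htail s * f s t with hcdef
    have hccont : ContinuousOn c (Set.Ioi 0) :=
      (hweak htail htailcont ⟨1, fun s _ => htailbd s⟩).1
    have hct₀ : c t₀ < ε₀ := by
      have hsplitc : c t₀ = (∫ s in Set.Ioc (0:ℝ) N, htail s * f s t₀)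
          + ∫ s in Set.Ioi ((N:ℝ)), htail s * f s t₀ := by
        rw [hcdef]
        rw [← setIntegral_union (Set.Ioc_disjoint_Ioi le_rfl) measurableSet_Ioi
          ((hint_hf_on htail htailcont htailbd t₀ h0).mono_set Set.Ioc_subset_Ioi_self)
          ((hint_hf_on htail htailcont htailbd t₀ h0).mono_set
            (Set.Ioi_subset_Ioi (Nat.cast_nonneg N))),
          Set.Ioc_union_Ioi_eq_Ioi (Nat.cast_nonneg N)]
      have hzero : (∫ s in Set.Ioc (0:ℝ) N, htail s * f s t₀) = 0 := by
        rw [setIntegral_congr_fun measurableSet_Ioc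
          (show Set.EqOn (fun s => htail s * f s t₀) (fun _ => (0:ℝ))
            (Set.Ioc 0 N) from ?_)]
        · simp
        · intro s hs
          have h1 : max 0 (s - (N:ℝ)) = 0 := max_eq_left (by linarith [hs.2])
          have : htail s = 0 := by
            simp only [htaildef]
            rw [h1]
            norm_num
          simp [this]
      have hle : (∫ s in Set.Ioi ((N:ℝ)), htail s * f s t₀)
          ≤ ∫ s in Set.Ioi ((N:ℝ)), f s t₀ := by
        apply setIntegral_mono_on
          ((hint_hf_on htail htailcont htailbd t₀ h0).mono_set
            (Set.Ioi_subset_Ioi (Nat.cast_nonneg N)))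
          ((hint_f_on t₀ h0).mono_set (Set.Ioi_subset_Ioi (Nat.cast_nonneg N)))
          measurableSet_Ioi
        intro s _
        exact mul_le_of_le_one_left (hf0 s t₀) (htail01 s).2
      rw [hsplitc, hzero, zero_add]
      exact lt_of_le_of_lt hle hN
    -- uniform continuity of g on [-1, R+1]
    obtain ⟨δ, hδpos, hδ⟩ := Metric.uniformContinuousOn_iff.mp
      ((isCompact_Icc (a := (-1:ℝ)) (b := R + 1)).uniformContinuousOn_of_continuous
        hg_cont.continuousOn) ε₀ hε₀pos
    set δ' : ℝ := min δ 1 with hδ'def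
    have hδ'pos : 0 < δ' := lt_min hδpos one_pos
    have hδ'le1 : δ' ≤ 1 := min_le_right _ _
    have hδ'leδ : δ' ≤ δ := min_le_left _ _
    set n : ℕ := ⌈R / δ'⌉₊ with hndef
    have hnδ'1 : R ≤ n * δ' := by
      rw [← div_le_iff₀ hδ'pos]
      exact Nat.le_ceil _
    have hnδ'2 : (n:ℝ) * δ' ≤ R + 1 := by
      have h1 : (n:ℝ) < R / δ' + 1 := Nat.ceil_lt_add_one (by positivity)
      have h2 : (n:ℝ) * δ' ≤ (R / δ' + 1) * δ' :=
        mul_le_mul_of_nonneg_right h1.le hδ'pos.le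
      rw [add_mul, div_mul_cancel₀ _ (ne_of_gt hδ'pos), one_mul] at h2
      linarith
    set φ : ℕ → ℝ → ℝ := fun i s => max 0 (1 - |s / δ' - i|) with hφdef
    have hφcont : ∀ i, Continuous (φ i) := fun i =>
      continuous_const.max (continuous_const.sub
        ((continuous_id.div_const δ').sub continuous_const).abs)
    have hφ0 : ∀ i s, 0 ≤ φ i s := fun i s => le_max_left _ _
    have hφbd : ∀ i s, |φ i s| ≤ 1 := by
      intro i s
      rw [abs_of_nonneg (hφ0 i s)]
      apply max_le zero_le_one
      have : (0:ℝ) ≤ |s / δ' - i| := abs_nonneg _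
      linarith
    set x : ℕ → X := fun i => g (i * δ') with hxdef
    have hx_bd : ∀ i, ‖x i‖ ≤ K := fun i => hg_bd _
    set G : ℝ → X := fun t => ∑ i ∈ Finset.range (n+1),
      (∫ s in Set.Ioi (0:ℝ), φ i s * f s t) • x i with hGdef
    have hGcont : ContinuousOn G (Set.Ioi 0) := by
      apply continuousOn_finset_sum
      intro i _
      exact ((hweak (φ i) (hφcont i) ⟨1, fun s _ => hφbd i s⟩).1).smul
        continuousOn_const
    -- key pointwise estimate
    have hkey : ∀ s ∈ Set.Ioi (0:ℝ),
        ‖g s - ∑ i ∈ Finset.range (n+1), φ i s • x i‖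
          ≤ ε₀ + 2 * K * htail s := by
      intro s hs
      have hs0 : (0:ℝ) < s := hs
      have hr0 : 0 ≤ s / δ' := div_nonneg hs0.le hδ'pos.le
      by_cases hrn : s / δ' ≤ n
      · have hsum1 : ∑ i ∈ Finset.range (n+1), φ i s = 1 :=
          hatSum_eq_one n (s / δ') hr0 hrn
        have hsle : s ≤ R + 1 := by
          have : s ≤ (n:ℝ) * δ' := by
            rw [← div_le_iff₀ hδ'pos]; exact hrn
          linarith
        have hdiff : g s - ∑ i ∈ Finset.range (n+1), φ i s • x i
            = ∑ i ∈ Finset.range (n+1), φ i s • (g s - x i) := by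
          simp only [smul_sub]
          rw [Finset.sum_sub_distrib, ← Finset.sum_smul, hsum1, one_smul]
        rw [hdiff]
        calc ‖∑ i ∈ Finset.range (n+1), φ i s • (g s - x i)‖
            ≤ ∑ i ∈ Finset.range (n+1), ‖φ i s • (g s - x i)‖ :=
              norm_sum_le _ _
          _ ≤ ∑ i ∈ Finset.range (n+1), φ i s * ε₀ := by
              apply Finset.sum_le_sum
              intro i hi
              rw [norm_smul, Real.norm_eq_abs, abs_of_nonneg (hφ0 i s)]
              rcases eq_or_lt_of_le (hφ0 i s) with hz | hz
              · rw [← hz]; simp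
              · apply mul_le_mul_of_nonneg_left _ (hφ0 i s)
                · have hclose : |s / δ' - i| < 1 := by
                    by_contra hcon
                    push_neg at hcon
                    have : φ i s = 0 := max_eq_left (by linarith)
                    rw [this] at hz; exact lt_irrefl 0 hz
                  have hdist : |s - i * δ'| < δ' := by
                    have heq : s - i * δ' = (s / δ' - i) * δ' := by
                      rw [sub_mul, div_mul_cancel₀ _ (ne_of_gt hδ'pos)]
                    rw [heq, abs_mul, abs_of_pos hδ'pos]
                    calc |s / δ' - i| * δ' < 1 * δ' :=
                        mul_lt_mul_of_pos_right hclose hδ'pos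
                      _ = δ' := one_mul _
                  have hiR : (i:ℝ) * δ' ≤ R + 1 := by
                    have hi' : (i:ℝ) ≤ n := by
                      exact_mod_cast Nat.le_of_lt_succ (Finset.mem_range.mp hi)
                    calc (i:ℝ) * δ' ≤ (n:ℝ) * δ' :=
                        mul_le_mul_of_nonneg_right hi' hδ'pos.le
                      _ ≤ R + 1 := hnδ'2
                  have hmem1 : s ∈ Set.Icc (-1:ℝ) (R+1) :=
                    ⟨by linarith, hsle⟩
                  have hiδnn : (0:ℝ) ≤ (i:ℝ) * δ' := by positivity
                  have hmem2 : (i:ℝ) * δ' ∈ Set.Icc (-1:ℝ) (R+1) :=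
                    ⟨by linarith, hiR⟩
                  have := hδ s hmem1 ((i:ℝ) * δ') hmem2
                    (by rw [Real.dist_eq]; exact lt_of_lt_of_le hdist hδ'leδ)
                  rw [dist_eq_norm] at this
                  exact this.le
          _ = ε₀ := by rw [← Finset.sum_mul, hsum1, one_mul]
          _ ≤ ε₀ + 2 * K * htail s := by
              have := (htail01 s).1
              nlinarith
      · push_neg at hrn
        have hsR : R ≤ s := by
          have : (n:ℝ) * δ' < s := by
            rw [← lt_div_iff₀ hδ'pos]; exact hrn
          linarith
        have htail1 : htail s = 1 := by
          simp only [htaildef]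
          rw [max_eq_right (by simp only [hRdef] at hsR; linarith : (0:ℝ) ≤ s - N),
            min_eq_left (by simp only [hRdef] at hsR; linarith : (1:ℝ) ≤ s - N)]
        have hsumle : ∑ i ∈ Finset.range (n+1), φ i s ≤ 1 :=
          hatSum_le_one n (s / δ') hr0
        calc ‖g s - ∑ i ∈ Finset.range (n+1), φ i s • x i‖
            ≤ ‖g s‖ + ‖∑ i ∈ Finset.range (n+1), φ i s • x i‖ :=
              norm_sub_le _ _
          _ ≤ K + K := by
              apply add_le_add (hg_bd s)
              calc ‖∑ i ∈ Finset.range (n+1), φ i s • x i‖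
                  ≤ ∑ i ∈ Finset.range (n+1), ‖φ i s • x i‖ := norm_sum_le _ _
                _ ≤ ∑ i ∈ Finset.range (n+1), φ i s * K := by
                    apply Finset.sum_le_sum
                    intro i _
                    rw [norm_smul, Real.norm_eq_abs, abs_of_nonneg (hφ0 i s)]
                    exact mul_le_mul_of_nonneg_left (hx_bd i) (hφ0 i s)
                _ = (∑ i ∈ Finset.range (n+1), φ i s) * K := by
                    rw [Finset.sum_mul]
                _ ≤ 1 * K := mul_le_mul_of_nonneg_right hsumle hK0
                _ = K := one_mul _
          _ ≤ ε₀ + 2 * K * htail s := by rw [htail1]; linarith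
    -- integral estimate
    have hFG : ∀ t ∈ Set.Ioi (0:ℝ),
        ‖(∫ s in Set.Ioi (0:ℝ), f s t • g s) - G t‖ ≤ ε₀ + 2 * K * c t := by
      intro t ht
      have hint_φf : ∀ i, Integrable (fun s => φ i s * f s t)
          (volume.restrict (Set.Ioi 0)) := fun i =>
        hint_hf (φ i) (hφcont i) (hφbd i) t ht
      have hG_int : G t = ∫ s in Set.Ioi (0:ℝ),
          ∑ i ∈ Finset.range (n+1), (φ i s * f s t) • x i := by
        rw [integral_finset_sum _ (fun i _ => (hint_φf i).smul_const (x i))]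
        simp only [hGdef]
        exact Finset.sum_congr rfl fun i _ => (integral_smul_const _ _).symm
      have hsum_eq : ∀ s, ∑ i ∈ Finset.range (n+1), (φ i s * f s t) • x i
          = f s t • ∑ i ∈ Finset.range (n+1), φ i s • x i := by
        intro s
        rw [Finset.smul_sum]
        exact Finset.sum_congr rfl fun i _ => by rw [mul_comm, mul_smul]
      rw [hG_int, ← integral_sub (hint_fg t ht)
        (integrable_finset_sum _ (fun i _ => (hint_φf i).smul_const (x i)))]
      have hbnd_cont : Continuous (fun s => ε₀ + 2 * K * htail s) :=
        continuous_const.add (continuous_const.mul htailcont)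
      have hbnd_int : Integrable (fun s => (ε₀ + 2 * K * htail s) * f s t)
          (volume.restrict (Set.Ioi 0)) := by
        apply Integrable.mono' ((hint_f t ht).const_mul (ε₀ + 2 * K))
          ((hbnd_cont.measurable.mul (hmeas_f t)).aestronglyMeasurable)
        refine ae_of_all _ fun s => ?_
        have h1 := (htail01 s).1
        have h2 := (htail01 s).2
        have h3 : (0:ℝ) ≤ ε₀ + 2 * K * htail s := by nlinarith
        have h4 : ε₀ + 2 * K * htail s ≤ ε₀ + 2 * K := by nlinarith
        simp only [Pi.mul_apply]; rw [Real.norm_eq_abs, abs_mul, abs_of_nonneg (hf0 s t),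
          abs_of_nonneg h3]
        exact mul_le_mul_of_nonneg_right h4 (hf0 s t)
      calc ‖∫ s in Set.Ioi (0:ℝ), (f s t • g s
              - ∑ i ∈ Finset.range (n+1), (φ i s * f s t) • x i)‖
          ≤ ∫ s in Set.Ioi (0:ℝ), (ε₀ + 2 * K * htail s) * f s t := by
            apply norm_integral_le_of_norm_le hbnd_int
            filter_upwards [ae_restrict_mem measurableSet_Ioi] with s hs
            rw [hsum_eq s, ← smul_sub, norm_smul, Real.norm_eq_abs,
              abs_of_nonneg (hf0 s t), mul_comm]
            exact mul_le_mul_of_nonneg_right (hkey s hs) (hf0 s t)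
        _ = ε₀ * (∫ s in Set.Ioi (0:ℝ), f s t)
              + 2 * K * ∫ s in Set.Ioi (0:ℝ), htail s * f s t := by
            have heq : (fun s => (ε₀ + 2 * K * htail s) * f s t)
                = fun s => ε₀ * f s t + 2 * K * (htail s * f s t) := by
              funext s; ring
            rw [heq, integral_add ((hint_f t ht).const_mul ε₀)
              ((hint_hf htail htailcont htailbd t ht).const_mul (2 * K)),
              integral_const_mul, integral_const_mul]
        _ = ε₀ + 2 * K * c t := by rw [hf1 t ht, mul_one]
    -- assemble
    have hGat : ContinuousAt G t₀ := hGcont.continuousAt (Ioi_mem_nhds h0)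
    have hcat : ContinuousAt c t₀ := hccont.continuousAt (Ioi_mem_nhds h0)
    have ev1 : ∀ᶠ t in nhds t₀, t ∈ Set.Ioi (0:ℝ) :=
      eventually_of_mem (Ioi_mem_nhds h0) fun x hx => hx
    have ev2 : ∀ᶠ t in nhds t₀, ‖G t - G t₀‖ < ε₀ := by
      have := hGat (Metric.ball_mem_nhds (G t₀) hε₀pos)
      filter_upwards [this] with t ht
      rw [← dist_eq_norm]
      exact Metric.mem_ball.mp ht
    have ev3 : ∀ᶠ t in nhds t₀, c t < ε₀ :=
      hcat (Iio_mem_nhds hct₀)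
    filter_upwards [ev1, ev2, ev3] with t ht1 ht2 ht3
    have h1 : ‖(∫ s in Set.Ioi (0:ℝ), f s t • g s) - G t‖ ≤ ε₀ + 2 * K * c t :=
      hFG t ht1
    have h2 : ‖(∫ s in Set.Ioi (0:ℝ), f s t₀ • g s) - G t₀‖
        ≤ ε₀ + 2 * K * c t₀ := hFG t₀ (Set.mem_Ioi.mpr h0)
    have h2' : ‖G t₀ - ∫ s in Set.Ioi (0:ℝ), f s t₀ • g s‖
        ≤ ε₀ + 2 * K * c t₀ := by rw [norm_sub_rev]; exact h2
    rw [dist_eq_norm, hTΦg t ht1, hTΦg t₀ h0]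
    have htri1 : ‖(∫ s in Set.Ioi (0:ℝ), f s t • g s)
            - ∫ s in Set.Ioi (0:ℝ), f s t₀ • g s‖
        ≤ ‖(∫ s in Set.Ioi (0:ℝ), f s t • g s) - G t‖
          + ‖G t - ∫ s in Set.Ioi (0:ℝ), f s t₀ • g s‖ := by
      rw [← dist_eq_norm, ← dist_eq_norm, ← dist_eq_norm]
      exact dist_triangle _ _ _
    have htri2 : ‖G t - ∫ s in Set.Ioi (0:ℝ), f s t₀ • g s‖
        ≤ ‖G t - G t₀‖ + ‖G t₀ - ∫ s in Set.Ioi (0:ℝ), f s t₀ • g s‖ := by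
      rw [← dist_eq_norm, ← dist_eq_norm, ← dist_eq_norm]
      exact dist_triangle _ _ _
    have hb1 : 2 * K * c t ≤ 2 * K * ε₀ := by nlinarith [ht3.le, hK0]
    have hb2 : 2 * K * c t₀ ≤ 2 * K * ε₀ := by nlinarith [hct₀.le, hK0]
    have hεeq : ε₀ * (4 + 4 * K) = ε := by
      rw [hε₀def]; field_simp
    nlinarith [h1, h2', htri1, htri2, ht2, hb1, hb2, hε₀pos]
end

section
/- Let X be a Banach space and (T(t))_{t≥0} a uniformly bounded strongly continuous semigroup on X with sup_{t≥0} ‖T(t)‖ ≤ M. Let Φ : (0,∞) → (0,∞) and let f : (0,∞) × (0,∞) → [0,∞) be jointly measurable such that for each t > 0 the function s ↦ f(s,t) is a probability density on (0,∞) and for every s > 0 and λ > 0, ∫₀^∞ e^{−λt} f(s,t) dt = (Φ(λ)/λ) e^{−sΦ(λ)}. Define T_Φ(t)u = ∫₀^∞ T(s)u f(s,t) ds. Then for every u ∈ X and every λ > 0 both Bochner integrals below exist and ∫₀^∞ e^{−λt} T_Φ(t)u dt = (Φ(λ)/λ) ∫₀^∞ e^{−τΦ(λ)} T(τ)u dτ.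 -/
open MeasureTheory Set

set_option maxHeartbeats 1000000 in
/-- **Laplace transform of the subordinated family.**
Let `(T(t))_{t ≥ 0}` be a uniformly bounded strongly continuous semigroup on a Banach
space `X` with `‖T(t)‖ ≤ M`, and let `f(·,t)` be probability densities on `(0,∞)` with
`∫₀^∞ e^{−λt} f(s,t) dt = (Φ(λ)/λ) e^{−sΦ(λ)}` for all `s, λ > 0`. Then for every
`u ∈ X` and `λ > 0` both Bochner integrals below exist and
`∫₀^∞ e^{−λt} T_Φ(t)u dt = (Φ(λ)/λ) ∫₀^∞ e^{−τΦ(λ)} T(τ)u dτ`, where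
`T_Φ(t)u = ∫₀^∞ T(s)u f(s,t) ds`. -/
theorem stmt6
    {X : Type*} [NormedAddCommGroup X] [NormedSpace ℝ X] [CompleteSpace X]
    (T : ℝ → X →L[ℝ] X) (M : ℝ)
    (hT0 : T 0 = ContinuousLinearMap.id ℝ X)
    (hTsemi : ∀ s t : ℝ, 0 ≤ s → 0 ≤ t → T (s + t) = (T s).comp (T t))
    (hTbd : ∀ t : ℝ, 0 ≤ t → ‖T t‖ ≤ M)
    (hTcont : ∀ u : X, ContinuousOn (fun t => T t u) (Set.Ici 0))
    (Φ : ℝ → ℝ) (hΦpos : ∀ z : ℝ, 0 < z → 0 < Φ z)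
    (f : ℝ → ℝ → ℝ)
    (hfmeas : Measurable fun q : ℝ × ℝ => f q.1 q.2)
    (hf0 : ∀ s t : ℝ, 0 ≤ f s t)
    (hf1 : ∀ t : ℝ, 0 < t → ∫ s in Set.Ioi (0:ℝ), f s t = 1)
    (hlap : ∀ s : ℝ, 0 < s → ∀ lam : ℝ, 0 < lam →
      ∫ t in Set.Ioi (0:ℝ), Real.exp (-lam * t) * f s t
        = Φ lam / lam * Real.exp (-s * Φ lam)) :
    ∀ u : X, ∀ lam : ℝ, 0 < lam →
      Integrable
        (fun t => Real.exp (-lam * t) • ∫ s in Set.Ioi (0:ℝ), f s t • T s u)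
        (volume.restrict (Set.Ioi 0)) ∧
      Integrable (fun τ => Real.exp (-τ * Φ lam) • T τ u)
        (volume.restrict (Set.Ioi 0)) ∧
      ∫ t in Set.Ioi (0:ℝ),
          Real.exp (-lam * t) • ∫ s in Set.Ioi (0:ℝ), f s t • T s u
        = (Φ lam / lam) • ∫ τ in Set.Ioi (0:ℝ), Real.exp (-τ * Φ lam) • T τ u := by
  intro u lam hlam
  set μ := volume.restrict (Set.Ioi (0:ℝ)) with hμ
  -- a globally continuous version of `s ↦ T s u`
  set g : ℝ → X := fun s => T (max s 0) u with hgdef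
  have hg_cont : Continuous g := by
    apply (hTcont u).comp_continuous (continuous_id.max continuous_const)
    intro s; exact le_max_right s 0
  have hg_eq : ∀ s ∈ Set.Ioi (0:ℝ), T s u = g s := by
    intro s hs
    simp only [hgdef, max_eq_left (le_of_lt (mem_Ioi.mp hs))]
  have hg_bd : ∀ s : ℝ, ‖g s‖ ≤ M * ‖u‖ :=
    fun s => le_trans ((T _).le_opNorm u)
      (mul_le_mul_of_nonneg_right (hTbd _ (le_max_right _ _)) (norm_nonneg u))
  have hMu : 0 ≤ M * ‖u‖ := le_trans (norm_nonneg _) (hg_bd 0)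
  -- integrability of the densities
  have hf_int : ∀ t ∈ Set.Ioi (0:ℝ), Integrable (fun s => f s t) μ := by
    intro t ht
    by_contra h
    exact one_ne_zero ((hf1 t (mem_Ioi.mp ht)).symm.trans (integral_undef h))
  have hexp_int : Integrable (fun t : ℝ => Real.exp (-lam * t)) μ :=
    exp_neg_integrableOn_Ioi 0 hlam
  have hexpΦ_int : Integrable (fun τ : ℝ => Real.exp (-(Φ lam) * τ)) μ :=
    exp_neg_integrableOn_Ioi 0 (hΦpos lam hlam)
  -- measurability helpers
  have hfmeas' : Measurable fun q : ℝ × ℝ => f q.2 q.1 := hfmeas.comp measurable_swap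
  have hfsec : ∀ t : ℝ, Measurable fun s => f s t := by
    intro t
    exact hfmeas.comp (measurable_id.prodMk measurable_const)
  -- the product integrand
  have Hmeas : AEStronglyMeasurable
      (fun q : ℝ × ℝ => (Real.exp (-lam * q.1) * f q.2 q.1) • g q.2) (μ.prod μ) := by
    apply AEStronglyMeasurable.smul
    · exact (((measurable_fst.const_mul (-lam)).exp.mul hfmeas')).aestronglyMeasurable
    · exact (hg_cont.comp continuous_snd).aestronglyMeasurable
  -- sections are integrable, with the right bound
  have hsec_int : ∀ t ∈ Set.Ioi (0:ℝ),
      Integrable (fun s => (Real.exp (-lam * t) * f s t) • g s) μ := by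
    intro t ht
    apply Integrable.mono'
      (((hf_int t ht).const_mul (Real.exp (-lam * t) * (M * ‖u‖))))
    · exact (((hfsec t).const_mul _).aestronglyMeasurable.smul
        hg_cont.aestronglyMeasurable)
    · filter_upwards with s
      rw [norm_smul, Real.norm_eq_abs,
        abs_of_nonneg (mul_nonneg (Real.exp_pos _).le (hf0 s t))]
      calc Real.exp (-lam * t) * f s t * ‖g s‖
          ≤ Real.exp (-lam * t) * f s t * (M * ‖u‖) :=
            mul_le_mul_of_nonneg_left (hg_bd s)
              (mul_nonneg (Real.exp_pos _).le (hf0 s t))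
        _ = Real.exp (-lam * t) * (M * ‖u‖) * f s t := by ring
  -- the key product integrability
  have HInt : Integrable
      (fun q : ℝ × ℝ => (Real.exp (-lam * q.1) * f q.2 q.1) • g q.2) (μ.prod μ) := by
    rw [integrable_prod_iff Hmeas]
    constructor
    · filter_upwards [ae_restrict_mem measurableSet_Ioi] with t ht
      exact hsec_int t ht
    · apply Integrable.mono' (hexp_int.const_mul (M * ‖u‖))
      · exact Hmeas.norm.integral_prod_right'
      · filter_upwards [ae_restrict_mem measurableSet_Ioi] with t ht
        rw [Real.norm_eq_abs, abs_of_nonneg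
          (integral_nonneg fun s => norm_nonneg _)]
        have hb : ∀ s : ℝ, ‖(Real.exp (-lam * t) * f s t) • g s‖
            ≤ Real.exp (-lam * t) * (M * ‖u‖) * f s t := by
          intro s
          rw [norm_smul, Real.norm_eq_abs,
            abs_of_nonneg (mul_nonneg (Real.exp_pos _).le (hf0 s t))]
          calc Real.exp (-lam * t) * f s t * ‖g s‖
              ≤ Real.exp (-lam * t) * f s t * (M * ‖u‖) :=
                mul_le_mul_of_nonneg_left (hg_bd s)
                  (mul_nonneg (Real.exp_pos _).le (hf0 s t))
            _ = Real.exp (-lam * t) * (M * ‖u‖) * f s t := by ring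
        calc (∫ s, ‖(Real.exp (-lam * t) * f s t) • g s‖ ∂μ)
            ≤ ∫ s, Real.exp (-lam * t) * (M * ‖u‖) * f s t ∂μ :=
              integral_mono_of_nonneg (Filter.Eventually.of_forall fun s => norm_nonneg _)
                ((hf_int t ht).const_mul _) (Filter.Eventually.of_forall hb)
          _ = Real.exp (-lam * t) * (M * ‖u‖) * ∫ s, f s t ∂μ := by
              rw [integral_const_mul]
          _ = M * ‖u‖ * Real.exp (-lam * t) := by
              rw [hμ, hf1 t (mem_Ioi.mp ht)]; ring
  -- inner integrals agree with the `g` versions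
  have hinner_eq : ∀ t : ℝ, (∫ s in Set.Ioi (0:ℝ), f s t • T s u)
      = ∫ s in Set.Ioi (0:ℝ), f s t • g s := by
    intro t
    exact setIntegral_congr_fun measurableSet_Ioi fun s hs => by
      rw [hg_eq s hs]
  -- first integrability claim
  have hFg_int : Integrable
      (fun t => Real.exp (-lam * t) • ∫ s in Set.Ioi (0:ℝ), f s t • g s) μ := by
    have hinner_meas : AEStronglyMeasurable
        (fun t => ∫ s, f s t • g s ∂μ) μ := by
      have : AEStronglyMeasurable (fun q : ℝ × ℝ => f q.2 q.1 • g q.2) (μ.prod μ) :=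
        hfmeas'.aestronglyMeasurable.smul (hg_cont.comp continuous_snd).aestronglyMeasurable
      exact this.integral_prod_right'
    apply Integrable.mono' (hexp_int.const_mul (M * ‖u‖))
    · exact ((measurable_id.const_mul (-lam)).exp.aestronglyMeasurable.smul hinner_meas)
    · filter_upwards [ae_restrict_mem measurableSet_Ioi] with t ht
      rw [norm_smul, Real.norm_eq_abs, abs_of_nonneg (Real.exp_pos _).le]
      have h1 : ‖∫ s, f s t • g s ∂μ‖ ≤ M * ‖u‖ := by
        calc ‖∫ s, f s t • g s ∂μ‖ ≤ ∫ s, ‖f s t • g s‖ ∂μ :=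
              norm_integral_le_integral_norm _
          _ ≤ ∫ s, M * ‖u‖ * f s t ∂μ := by
              apply integral_mono_of_nonneg
                (Filter.Eventually.of_forall fun s => norm_nonneg _)
                ((hf_int t ht).const_mul _)
              filter_upwards with s
              rw [norm_smul, Real.norm_eq_abs, abs_of_nonneg (hf0 s t)]
              calc f s t * ‖g s‖ ≤ f s t * (M * ‖u‖) :=
                    mul_le_mul_of_nonneg_left (hg_bd s) (hf0 s t)
                _ = M * ‖u‖ * f s t := by ring
          _ = M * ‖u‖ := by rw [integral_const_mul, hμ, hf1 t (mem_Ioi.mp ht), mul_one]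
      calc Real.exp (-lam * t) * ‖∫ s, f s t • g s ∂μ‖
          ≤ Real.exp (-lam * t) * (M * ‖u‖) :=
            mul_le_mul_of_nonneg_left h1 (Real.exp_pos _).le
        _ = M * ‖u‖ * Real.exp (-lam * t) := by ring
  have hF_int : Integrable
      (fun t => Real.exp (-lam * t) • ∫ s in Set.Ioi (0:ℝ), f s t • T s u) μ := by
    apply hFg_int.congr
    filter_upwards with t
    rw [hinner_eq t]
  -- second integrability claim
  have hGg_int : Integrable (fun τ => Real.exp (-τ * Φ lam) • g τ) μ := by
    apply Integrable.mono' (hexpΦ_int.const_mul (M * ‖u‖))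
    · exact ((Real.continuous_exp.comp (continuous_id.neg.mul continuous_const)).smul
        hg_cont).aestronglyMeasurable
    · filter_upwards with τ
      rw [norm_smul, Real.norm_eq_abs, abs_of_nonneg (Real.exp_pos _).le]
      have : Real.exp (-τ * Φ lam) = Real.exp (-(Φ lam) * τ) := by ring_nf
      rw [this]
      calc Real.exp (-(Φ lam) * τ) * ‖g τ‖
          ≤ Real.exp (-(Φ lam) * τ) * (M * ‖u‖) :=
            mul_le_mul_of_nonneg_left (hg_bd τ) (Real.exp_pos _).le
        _ = M * ‖u‖ * Real.exp (-(Φ lam) * τ) := by ring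
  have hG_int : Integrable (fun τ => Real.exp (-τ * Φ lam) • T τ u) μ := by
    apply hGg_int.congr
    filter_upwards [ae_restrict_mem measurableSet_Ioi] with τ hτ
    rw [hg_eq τ hτ]
  refine ⟨hF_int, hG_int, ?_⟩
  -- now the equality
  have step1 : (∫ t in Set.Ioi (0:ℝ),
      Real.exp (-lam * t) • ∫ s in Set.Ioi (0:ℝ), f s t • T s u)
      = ∫ t, ∫ s, (Real.exp (-lam * t) * f s t) • g s ∂μ ∂μ := by
    apply setIntegral_congr_fun measurableSet_Ioi
    intro t _
    dsimp only
    rw [hinner_eq t, ← integral_smul]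
    congr 1
    ext s
    rw [smul_smul]
  have step2 : (∫ t, ∫ s, (Real.exp (-lam * t) * f s t) • g s ∂μ ∂μ)
      = ∫ s, ∫ t, (Real.exp (-lam * t) * f s t) • g s ∂μ ∂μ :=
    integral_integral_swap HInt
  have step3 : (∫ s, ∫ t, (Real.exp (-lam * t) * f s t) • g s ∂μ ∂μ)
      = ∫ s in Set.Ioi (0:ℝ), (Φ lam / lam) • (Real.exp (-s * Φ lam) • g s) := by
    apply setIntegral_congr_fun measurableSet_Ioi
    intro s hs
    dsimp only
    rw [integral_smul_const, hlap s (mem_Ioi.mp hs) lam hlam, smul_smul]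
  have step4 : (∫ s in Set.Ioi (0:ℝ), (Φ lam / lam) • (Real.exp (-s * Φ lam) • g s))
      = (Φ lam / lam) • ∫ s in Set.Ioi (0:ℝ), Real.exp (-s * Φ lam) • g s :=
    integral_smul _ _
  rw [step1, step2, step3, step4]
  congr 1
  exact (setIntegral_congr_fun measurableSet_Ioi fun τ hτ => by
    rw [hg_eq τ hτ]).symm
end

section
/- Let Φ : (0,∞) → (0,∞) satisfy lim_{z→0⁺} Φ(z)/z = l ∈ (0,∞). Fix λ > 0 and let g : (0,∞) → [0,∞) be measurable with ∫₀^∞ e^{−zt} g(t) dt = Φ(z)/(z(λ + Φ(z))) for all z > 0. Then g is integrable on (0,∞), and ∫₀^∞ g(t) dt = l/λ. -/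
open MeasureTheory Set Filter

/-- **Integrability of the relaxation function (short-range dependence).**
Let `Φ : (0,∞) → (0,∞)` satisfy `lim_{z→0⁺} Φ(z)/z = l ∈ (0,∞)`. Fix `λ > 0` and let
`g : (0,∞) → [0,∞)` be measurable with Laplace transform
`∫₀^∞ e^{−zt} g(t) dt = Φ(z)/(z(λ + Φ(z)))` for all `z > 0`. Then `g` is integrable
on `(0,∞)` and `∫₀^∞ g(t) dt = l/λ`. -/
theorem stmt8 (Φ : ℝ → ℝ) (l : ℝ) (hl : 0 < l)
    (hΦpos : ∀ z : ℝ, 0 < z → 0 < Φ z)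
    (hΦlim : Tendsto (fun z => Φ z / z) (nhdsWithin 0 (Set.Ioi 0)) (nhds l))
    (lam : ℝ) (hlam : 0 < lam)
    (g : ℝ → ℝ) (hgmeas : Measurable g) (hg0 : ∀ t : ℝ, 0 < t → 0 ≤ g t)
    (hglap : ∀ z : ℝ, 0 < z →
      ∫ t in Set.Ioi (0:ℝ), Real.exp (-z * t) * g t = Φ z / (z * (lam + Φ z))) :
    IntegrableOn g (Set.Ioi 0) ∧ ∫ t in Set.Ioi (0:ℝ), g t = l / lam := by
  have hgae : 0 ≤ᵐ[volume.restrict (Set.Ioi (0:ℝ))] g := by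
    filter_upwards [ae_restrict_mem measurableSet_Ioi] with t ht using hg0 t ht
  -- positivity of the Laplace transform value
  have hpos : ∀ z : ℝ, 0 < z → 0 < Φ z / (z * (lam + Φ z)) := by
    intro z hz
    have := hΦpos z hz
    positivity
  -- integrability of the integrand for each z > 0
  have hInt : ∀ z : ℝ, 0 < z →
      IntegrableOn (fun t => Real.exp (-z * t) * g t) (Set.Ioi 0) := by
    intro z hz
    by_contra h
    have h0 : (∫ t in Set.Ioi (0:ℝ), Real.exp (-z * t) * g t) = 0 :=
      integral_undef h
    have := hglap z hz
    rw [h0] at this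
    exact absurd this.symm (ne_of_gt (hpos z hz))
  -- lintegral formula
  have hlint : ∀ z : ℝ, 0 < z →
      (∫⁻ t in Set.Ioi (0:ℝ), ENNReal.ofReal (Real.exp (-z * t) * g t))
        = ENNReal.ofReal (Φ z / (z * (lam + Φ z))) := by
    intro z hz
    have hnn : 0 ≤ᵐ[volume.restrict (Set.Ioi (0:ℝ))]
        (fun t => Real.exp (-z * t) * g t) := by
      filter_upwards [ae_restrict_mem measurableSet_Ioi] with t ht
      exact mul_nonneg (Real.exp_nonneg _) (hg0 t ht)
    rw [← ofReal_integral_eq_lintegral_ofReal (hInt z hz) hnn, hglap z hz]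
  -- the sequence z n = 1/(n+1)
  set zs : ℕ → ℝ := fun n => 1 / (n + 1) with hzs
  have hzpos : ∀ n : ℕ, 0 < zs n := fun n => by positivity
  have hzto : Tendsto zs atTop (nhdsWithin 0 (Set.Ioi 0)) := by
    apply tendsto_nhdsWithin_of_tendsto_nhds_of_eventually_within
    · exact tendsto_one_div_add_atTop_nhds_zero_nat
    · exact Filter.Eventually.of_forall fun n => hzpos n
  -- monotone convergence
  have hmono : ∀ᵐ t ∂(volume.restrict (Set.Ioi (0:ℝ))),
      Monotone fun n => ENNReal.ofReal (Real.exp (-zs n * t) * g t) := by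
    filter_upwards [ae_restrict_mem measurableSet_Ioi] with t ht
    intro m n hmn
    apply ENNReal.ofReal_le_ofReal
    apply mul_le_mul_of_nonneg_right _ (hg0 t ht)
    apply Real.exp_le_exp.2
    have : zs n ≤ zs m := by
      apply one_div_le_one_div_of_le (by positivity)
      exact_mod_cast Nat.add_le_add_right hmn 1
    nlinarith [le_of_lt (Set.mem_Ioi.mp ht)]
  have hptw : ∀ᵐ t ∂(volume.restrict (Set.Ioi (0:ℝ))),
      Tendsto (fun n => ENNReal.ofReal (Real.exp (-zs n * t) * g t)) atTop
        (nhds (ENNReal.ofReal (g t))) := by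
    refine Filter.Eventually.of_forall fun t => ?_
    have h1 : Tendsto (fun n => Real.exp (-zs n * t) * g t) atTop (nhds (g t)) := by
      have hz0 : Tendsto zs atTop (nhds (0:ℝ)) := tendsto_one_div_add_atTop_nhds_zero_nat
      have : Tendsto (fun n => Real.exp (-zs n * t)) atTop (nhds 1) := by
        have hexp : Tendsto (fun n => Real.exp (-zs n * t)) atTop (nhds (Real.exp 0)) :=
          (Real.continuous_exp.continuousAt.tendsto).comp
            (by simpa using hz0.neg.mul_const t)
        simpa [Real.exp_zero] using hexp
      simpa using this.mul_const (g t)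
    exact (ENNReal.continuous_ofReal.continuousAt.tendsto).comp h1
  have hmeas : ∀ n : ℕ, AEMeasurable
      (fun t => ENNReal.ofReal (Real.exp (-zs n * t) * g t))
      (volume.restrict (Set.Ioi (0:ℝ))) := by
    intro n
    exact (ENNReal.measurable_ofReal.comp
      ((Real.measurable_exp.comp (measurable_id.const_mul (-zs n))).mul hgmeas)).aemeasurable
  have hTend1 : Tendsto
      (fun n => ∫⁻ t in Set.Ioi (0:ℝ), ENNReal.ofReal (Real.exp (-zs n * t) * g t))
      atTop (nhds (∫⁻ t in Set.Ioi (0:ℝ), ENNReal.ofReal (g t))) :=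
    lintegral_tendsto_of_tendsto_of_monotone hmeas hmono hptw
  -- limit of the RHS
  have hΦ0 : Tendsto Φ (nhdsWithin 0 (Set.Ioi 0)) (nhds 0) := by
    have : Tendsto (fun z => (Φ z / z) * z) (nhdsWithin 0 (Set.Ioi 0)) (nhds (l * 0)) :=
      hΦlim.mul (tendsto_nhdsWithin_of_tendsto_nhds tendsto_id)
    rw [mul_zero] at this
    apply this.congr'
    filter_upwards [self_mem_nhdsWithin] with z hz
    exact div_mul_cancel₀ _ (ne_of_gt hz)
  have hRHS : Tendsto (fun z => Φ z / (z * (lam + Φ z))) (nhdsWithin 0 (Set.Ioi 0))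
      (nhds (l / lam)) := by
    have h2 : Tendsto (fun z => (Φ z / z) / (lam + Φ z)) (nhdsWithin 0 (Set.Ioi 0))
        (nhds (l / lam)) := by
      have := hΦlim.div (tendsto_const_nhds.add hΦ0) (by simpa using ne_of_gt hlam)
      simpa [Pi.div_def] using this
    apply h2.congr
    intro z
    rw [div_mul_eq_div_div]
  have hTend2 : Tendsto
      (fun n => ∫⁻ t in Set.Ioi (0:ℝ), ENNReal.ofReal (Real.exp (-zs n * t) * g t))
      atTop (nhds (ENNReal.ofReal (l / lam))) := by
    have : Tendsto (fun n => ENNReal.ofReal (Φ (zs n) / (zs n * (lam + Φ (zs n)))))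
        atTop (nhds (ENNReal.ofReal (l / lam))) :=
      (ENNReal.continuous_ofReal.continuousAt.tendsto).comp (hRHS.comp hzto)
    apply this.congr
    intro n
    exact (hlint (zs n) (hzpos n)).symm
  have hkey : (∫⁻ t in Set.Ioi (0:ℝ), ENNReal.ofReal (g t)) = ENNReal.ofReal (l / lam) :=
    tendsto_nhds_unique hTend1 hTend2
  have hlt : (∫⁻ t in Set.Ioi (0:ℝ), ENNReal.ofReal (g t)) < ⊤ := by
    rw [hkey]; exact ENNReal.ofReal_lt_top
  have hintg : IntegrableOn g (Set.Ioi 0) := by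
    refine ⟨hgmeas.aestronglyMeasurable, ?_⟩
    show (∫⁻ t in Set.Ioi (0:ℝ), (‖g t‖₊ : ENNReal)) < ⊤
    have : (∫⁻ t in Set.Ioi (0:ℝ), (‖g t‖₊ : ENNReal))
        = ∫⁻ t in Set.Ioi (0:ℝ), ENNReal.ofReal (g t) := by
      apply lintegral_congr_ae
      filter_upwards [hgae] with t ht
      rw [← Real.enorm_eq_ofReal ht, enorm_eq_nnnorm]
    rwa [this]
  refine ⟨hintg, ?_⟩
  rw [integral_eq_lintegral_of_nonneg_ae hgae hgmeas.aestronglyMeasurable, hkey,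
    ENNReal.toReal_ofReal (by positivity)]
end

section
/- Fix θ > 0 and let p(s,x,y) = (2π(1−e^{−2θs}))^{−1/2} exp(−(x − y e^{−θs})²/(2(1−e^{−2θs}))) be the Ornstein–Uhlenbeck (Mehler) transition kernel and m(x) = (2π)^{−1/2} e^{−x²/2} the standard Gaussian density. For each t > 0 let f_t be a probability density on (0,∞) and set 𝔢(t,λ) = ∫₀^∞ e^{−λs} f_t(s) ds. Assume: (i) for each λ > 0, 𝔢(t,λ) → 0 as t → +∞; (ii) for each λ ≥ 0 the map t ↦ 𝔢(t,λ) is nonincreasing; (iii) there exists t₀ > 0 with sup_{λ≥0} λ·𝔢(t₀,λ) < ∞. Then for every x, y ∈ ℝ, lim_{t→+∞} ∫₀^∞ p(s,x,y) f_t(s) ds = m(x). -/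
open MeasureTheory Set Filter

/-- The Ornstein–Uhlenbeck (Mehler) transition kernel
`p(s,x,y) = (2π(1−e^{−2θs}))^{−1/2} exp(−(x − y e^{−θs})²/(2(1−e^{−2θs})))`. -/
noncomputable def ouKernel (θ s x y : ℝ) : ℝ :=
  (Real.sqrt (2 * Real.pi * (1 - Real.exp (-2 * θ * s))))⁻¹ *
    Real.exp (-(x - y * Real.exp (-θ * s)) ^ 2 / (2 * (1 - Real.exp (-2 * θ * s))))

/-- The standard Gaussian density `m(x) = (2π)^{−1/2} e^{−x²/2}`. -/
noncomputable def gauss (x : ℝ) : ℝ :=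
  (Real.sqrt (2 * Real.pi))⁻¹ * Real.exp (-x ^ 2 / 2)

lemma gauss_nonneg (x : ℝ) : 0 ≤ gauss x := by unfold gauss; positivity

lemma ouKernel_nonneg (θ s x y : ℝ) : 0 ≤ ouKernel θ s x y := by
  unfold ouKernel; positivity

lemma one_sub_exp_pos {θ s : ℝ} (hθ : 0 < θ) (hs : 0 < s) :
    0 < 1 - Real.exp (-2 * θ * s) := by
  have : Real.exp (-2 * θ * s) < 1 := Real.exp_lt_one_iff.2 (by nlinarith)
  linarith

lemma convex_exp_bound {a s : ℝ} (hs0 : 0 ≤ s) (hs1 : s ≤ 1) :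
    s * (1 - Real.exp (-a)) ≤ 1 - Real.exp (-a * s) := by
  have h := convexOn_exp.2 (mem_univ (-a)) (mem_univ (0:ℝ)) hs0 (by linarith : (0:ℝ) ≤ 1 - s)
    (by ring)
  simp only [smul_eq_mul, mul_zero, add_zero, Real.exp_zero, mul_one] at h
  have h' : Real.exp (-a * s) ≤ s * Real.exp (-a) + (1 - s) := by
    calc Real.exp (-a * s) = Real.exp (s * (-a)) := by ring_nf
    _ ≤ s * Real.exp (-a) + (1 - s) := h
  linarith

lemma ouKernel_le_small {θ s x y : ℝ} (hθ : 0 < θ) (hs0 : 0 < s) (hs1 : s ≤ 1) :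
    ouKernel θ s x y ≤ (Real.sqrt (2 * Real.pi * (1 - Real.exp (-2 * θ))))⁻¹ * (Real.sqrt s)⁻¹ := by
  have hpos := one_sub_exp_pos hθ hs0
  have hpos1 : 0 < 1 - Real.exp (-2 * θ) := by simpa using one_sub_exp_pos hθ one_pos
  have hexp : Real.exp (-(x - y * Real.exp (-θ * s)) ^ 2 / (2 * (1 - Real.exp (-2 * θ * s)))) ≤ 1 := by
    apply Real.exp_le_one_iff.2
    apply div_nonpos_of_nonpos_of_nonneg (neg_nonpos.2 (sq_nonneg _)) (by positivity)
  have hconv : (2 * Real.pi * (1 - Real.exp (-2 * θ))) * s ≤ 2 * Real.pi * (1 - Real.exp (-2 * θ * s)) := by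
    have := convex_exp_bound (a := 2 * θ) hs0.le hs1
    have hπ : (0:ℝ) < 2 * Real.pi := by positivity
    have h2 : -(2*θ) * s = -2 * θ * s := by ring
    have h3 : -(2*θ) = -2*θ := by ring
    rw [h2, h3] at this
    nlinarith
  have hsq : Real.sqrt (2 * Real.pi * (1 - Real.exp (-2 * θ))) * Real.sqrt s
      ≤ Real.sqrt (2 * Real.pi * (1 - Real.exp (-2 * θ * s))) := by
    rw [← Real.sqrt_mul (mul_nonneg (by positivity) hpos1.le)]
    exact Real.sqrt_le_sqrt hconv
  have hinv : (Real.sqrt (2 * Real.pi * (1 - Real.exp (-2 * θ * s))))⁻¹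
      ≤ (Real.sqrt (2 * Real.pi * (1 - Real.exp (-2 * θ))) * Real.sqrt s)⁻¹ := by
    apply inv_anti₀ (mul_pos (Real.sqrt_pos.2 (mul_pos (by positivity) hpos1)) (Real.sqrt_pos.2 hs0)) hsq
  calc ouKernel θ s x y ≤ (Real.sqrt (2 * Real.pi * (1 - Real.exp (-2 * θ * s))))⁻¹ * 1 := by
        unfold ouKernel
        apply mul_le_mul_of_nonneg_left hexp (by positivity)
    _ ≤ (Real.sqrt (2 * Real.pi * (1 - Real.exp (-2 * θ))) * Real.sqrt s)⁻¹ := by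
        rw [mul_one]; exact hinv
    _ = (Real.sqrt (2 * Real.pi * (1 - Real.exp (-2 * θ))))⁻¹ * (Real.sqrt s)⁻¹ := by
        rw [mul_inv]

lemma sqrt_two_pow (m : ℕ) : Real.sqrt ((2:ℝ)^m) = (Real.sqrt 2)^m := by
  induction m with
  | zero => simp
  | succ n ih => rw [pow_succ, pow_succ, Real.sqrt_mul (by positivity), ih]

lemma ou_lip (θ x y δ : ℝ) (hθ : 0 < θ) (hδ : 0 < δ) :
    ∃ L : ℝ, 0 ≤ L ∧ ∀ s : ℝ, δ ≤ s →
      |ouKernel θ s x y - gauss x| ≤ L * Real.exp (-θ * s) := by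
  set r := Real.exp (-θ * δ) with hr
  have hr0 : 0 < r := Real.exp_pos _
  have hr1 : r < 1 := Real.exp_lt_one_iff.2 (by nlinarith)
  set F : ℝ → ℝ := fun u =>
    (Real.sqrt (2 * Real.pi * (1 - u ^ 2)))⁻¹ *
      Real.exp (-(x - y * u) ^ 2 / (2 * (1 - u ^ 2))) with hF
  have hFc : ∀ u ∈ Ioo (-1:ℝ) 1, ContDiffAt ℝ 1 F u := by
    intro u hu
    have h1u : (0:ℝ) < 1 - u ^ 2 := by
      obtain ⟨hu1, hu2⟩ := hu; nlinarith
    have harg : ContDiffAt ℝ 1 (fun u : ℝ => 2 * Real.pi * (1 - u ^ 2)) u := by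
      fun_prop
    have hsqrt : ContDiffAt ℝ 1 (fun u : ℝ => Real.sqrt (2 * Real.pi * (1 - u ^ 2))) u :=
      (Real.contDiffAt_sqrt (by positivity : 2 * Real.pi * (1 - u ^ 2) ≠ 0)).comp u harg
    have hsqrtne : Real.sqrt (2 * Real.pi * (1 - u ^ 2)) ≠ 0 := by
      positivity
    have hA : ContDiffAt ℝ 1 (fun u : ℝ => (Real.sqrt (2 * Real.pi * (1 - u ^ 2)))⁻¹) u :=
      hsqrt.inv hsqrtne
    have hdenne : (2 * (1 - u ^ 2)) ≠ 0 := by positivity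
    have hquot : ContDiffAt ℝ 1 (fun u : ℝ => -(x - y * u) ^ 2 / (2 * (1 - u ^ 2))) u := by
      exact ContDiffAt.div
        (by fun_prop : ContDiffAt ℝ 1 (fun u : ℝ => -(x - y * u) ^ 2) u)
        (by fun_prop : ContDiffAt ℝ 1 (fun u : ℝ => 2 * (1 - u ^ 2)) u) hdenne
    have hE : ContDiffAt ℝ 1 (fun u : ℝ => Real.exp (-(x - y * u) ^ 2 / (2 * (1 - u ^ 2)))) u :=
      (Real.contDiff_exp.contDiffAt).comp u hquot
    exact hA.mul hE
  have hsub : Icc (0:ℝ) r ⊆ Ioo (-1:ℝ) 1 := fun u hu =>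
    ⟨by linarith [hu.1], lt_of_le_of_lt hu.2 hr1⟩
  have hdiff : ∀ u ∈ Icc (0:ℝ) r, DifferentiableAt ℝ F u := fun u hu =>
    (hFc u (hsub hu)).differentiableAt one_ne_zero
  have hcd : ContDiffOn ℝ 1 F (Ioo (-1:ℝ) 1) := fun u hu => (hFc u hu).contDiffWithinAt
  have hcont : ContinuousOn (deriv F) (Icc (0:ℝ) r) :=
    (hcd.continuousOn_deriv_of_isOpen isOpen_Ioo le_rfl).mono hsub
  obtain ⟨L₀, hL₀⟩ := (isCompact_Icc).exists_bound_of_continuousOn hcont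
  refine ⟨max L₀ 0, le_max_right _ _, fun s hs => ?_⟩
  have hu0 : 0 ≤ Real.exp (-θ * s) := (Real.exp_pos _).le
  have hur : Real.exp (-θ * s) ≤ r := Real.exp_le_exp.2 (by nlinarith)
  have humem : Real.exp (-θ * s) ∈ Icc (0:ℝ) r := ⟨hu0, hur⟩
  have h0mem : (0:ℝ) ∈ Icc (0:ℝ) r := ⟨le_rfl, hr0.le⟩
  have hbound : ∀ u ∈ Icc (0:ℝ) r, ‖deriv F u‖ ≤ max L₀ 0 := fun u hu =>
    le_trans (le_of_eq rfl) (le_trans (hL₀ u hu) (le_max_left _ _))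
  have key := (convex_Icc 0 r).norm_image_sub_le_of_norm_deriv_le hdiff hbound h0mem humem
  have hFu : F (Real.exp (-θ * s)) = ouKernel θ s x y := by
    have hsq : Real.exp (-θ * s) ^ 2 = Real.exp (-2 * θ * s) := by
      rw [sq, ← Real.exp_add]; ring_nf
    simp only [hF, hsq]
    rfl
  have hF0 : F 0 = gauss x := by
    simp only [hF, gauss]
    norm_num
  rw [hFu, hF0] at key
  calc |ouKernel θ s x y - gauss x| ≤ max L₀ 0 * ‖Real.exp (-θ * s) - 0‖ := by
        simpa [Real.norm_eq_abs] using key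
    _ = max L₀ 0 * Real.exp (-θ * s) := by
        rw [sub_zero, Real.norm_eq_abs, abs_of_nonneg hu0]

lemma ouKernel_measurable (θ x y : ℝ) : Measurable (fun s => ouKernel θ s x y) := by
  unfold ouKernel
  fun_prop

lemma dyadic_bound (f : ℝ → ℝ) (hmeas : Measurable f) (hnn : ∀ s, 0 ≤ f s)
    (hint : IntegrableOn f (Ioi 0) volume)
    (C : ℝ) (hC0 : 0 ≤ C)
    (hmass : ∀ lam : ℝ, 0 < lam →
      ∫ s in Ioi (0:ℝ), Real.exp (-lam * s) * f s ≤ C / lam)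
    (N : ℕ) :
    IntegrableOn (fun s => (Real.sqrt s)⁻¹ * f s) (Ioc 0 ((2:ℝ)^N)⁻¹) volume ∧
    ∫ s in Ioc (0:ℝ) ((2:ℝ)^N)⁻¹, (Real.sqrt s)⁻¹ * f s
      ≤ (Real.exp 1 * C * Real.sqrt 2 * (1 - (Real.sqrt 2)⁻¹)⁻¹) * ((Real.sqrt 2)⁻¹)^N := by
  set a : ℕ → ℝ := fun m => ((2:ℝ)^m)⁻¹ with ha
  have ha_pos : ∀ m, 0 < a m := fun m => by positivity
  have ha_anti : ∀ {m n : ℕ}, m ≤ n → a n ≤ a m := fun {m n} h => by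
    apply inv_anti₀ (by positivity)
    exact pow_le_pow_right₀ one_le_two h
  set P : ℕ → Set ℝ := fun k => Ioc (a (N+k+1)) (a (N+k)) with hP
  have hPmeas : ∀ k, MeasurableSet (P k) := fun k => measurableSet_Ioc
  have hPsub : ∀ k, P k ⊆ Ioi (0:ℝ) := fun k s hs =>
    lt_trans (ha_pos _) hs.1
  -- union
  have hU : (⋃ k, P k) = Ioc (0:ℝ) (a N) := by
    ext s
    simp only [mem_iUnion, hP, mem_Ioc, mem_Ioi]
    constructor
    · rintro ⟨k, h1, h2⟩
      exact ⟨lt_trans (ha_pos _) h1, le_trans h2 (ha_anti (Nat.le_add_right _ _))⟩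
    · rintro ⟨hs0, hsN⟩
      have hex : ∃ k, a (N+k+1) < s := by
        obtain ⟨n, hn⟩ := exists_pow_lt_of_lt_one hs0 (by norm_num : (2:ℝ)⁻¹ < 1)
        refine ⟨n, lt_of_le_of_lt ?_ (by rwa [inv_pow] at hn)⟩
        exact ha_anti (by omega)
      refine ⟨Nat.find hex, Nat.find_spec hex, ?_⟩
      rcases Nat.eq_zero_or_pos (Nat.find hex) with h0 | hpos
      · rw [h0]; simpa using hsN
      · obtain ⟨j, hj⟩ := Nat.exists_eq_succ_of_ne_zero (Nat.pos_iff_ne_zero.1 hpos)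
        rw [hj]
        have := Nat.find_min hex (m := j) (by omega)
        push_neg at this
        simpa [Nat.succ_eq_add_one, add_assoc] using this
  have hdisj : Pairwise (Function.onFun Disjoint P) := by
    rw [pairwise_disjoint_on]
    intro i j hij
    rw [hP]
    apply Set.Ioc_disjoint_Ioc.2
    have : a (N+j) ≤ a (N+i+1) := ha_anti (by omega)
    calc min (a (N+i)) (a (N+j)) ≤ a (N+j) := min_le_right _ _
      _ ≤ a (N+i+1) := this
      _ ≤ max (a (N+i+1)) (a (N+j+1)) := le_max_left _ _
  -- mass bound on each piece
  have hpiece : ∀ m : ℕ, ∫ s in Ioc (a (m+1)) (a m), f s ≤ Real.exp 1 * (C / 2^m) := by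
    intro m
    have hsub' : Ioc (a (m+1)) (a m) ⊆ Ioi (0:ℝ) := fun s hs => lt_trans (ha_pos _) hs.1
    have hfim : IntegrableOn f (Ioc (a (m+1)) (a m)) volume := hint.mono_set hsub'
    have hintExp : IntegrableOn (fun s => Real.exp (-(2^m : ℝ) * s) * f s) (Ioi 0) volume := by
      apply Integrable.mono hint
      · exact ((Real.continuous_exp.comp (by fun_prop)).measurable.mul hmeas).aestronglyMeasurable
      · filter_upwards [ae_restrict_mem measurableSet_Ioi] with s hs
        rw [Real.norm_eq_abs, Real.norm_eq_abs, abs_of_nonneg (mul_nonneg (Real.exp_pos _).le (hnn s)),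
          abs_of_nonneg (hnn s)]
        have : Real.exp (-(2^m : ℝ) * s) ≤ 1 := Real.exp_le_one_iff.2 (by
          have : (0:ℝ) < s := hs
          nlinarith [pow_pos (by norm_num : (0:ℝ) < 2) m])
        nlinarith [hnn s]
    have step1 : ∫ s in Ioc (a (m+1)) (a m), f s
        ≤ ∫ s in Ioc (a (m+1)) (a m), Real.exp 1 * (Real.exp (-(2^m : ℝ) * s) * f s) := by
      apply setIntegral_mono_on hfim ((hintExp.mono_set hsub').const_mul _) measurableSet_Ioc
      intro s hs
      have hs0 : 0 < s := lt_trans (ha_pos _) hs.1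
      have hsm : (2:ℝ)^m * s ≤ 1 := by
        have := hs.2
        rw [ha] at this
        calc (2:ℝ)^m * s ≤ (2:ℝ)^m * ((2:ℝ)^m)⁻¹ := by
              apply mul_le_mul_of_nonneg_left this (by positivity)
          _ = 1 := by field_simp
      have h1 : Real.exp (-1 : ℝ) ≤ Real.exp (-(2^m : ℝ) * s) := Real.exp_le_exp.2 (by nlinarith)
      have h2 : (1:ℝ) ≤ Real.exp 1 * Real.exp (-(2^m : ℝ) * s) := by
        calc (1:ℝ) = Real.exp 1 * Real.exp (-1 : ℝ) := by rw [← Real.exp_add]; norm_num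
          _ ≤ Real.exp 1 * Real.exp (-(2^m : ℝ) * s) :=
              mul_le_mul_of_nonneg_left h1 (Real.exp_pos _).le
      calc f s = 1 * f s := (one_mul _).symm
        _ ≤ (Real.exp 1 * Real.exp (-(2^m : ℝ) * s)) * f s :=
            mul_le_mul_of_nonneg_right h2 (hnn s)
        _ = Real.exp 1 * (Real.exp (-(2^m : ℝ) * s) * f s) := by ring
    have step2 : ∫ s in Ioc (a (m+1)) (a m), Real.exp (-(2^m : ℝ) * s) * f s
        ≤ ∫ s in Ioi (0:ℝ), Real.exp (-(2^m : ℝ) * s) * f s := by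
      apply setIntegral_mono_set hintExp
      · filter_upwards with s using mul_nonneg (Real.exp_pos _).le (hnn s)
      · exact HasSubset.Subset.eventuallyLE hsub'
    have step3 := hmass ((2:ℝ)^m) (by positivity)
    calc ∫ s in Ioc (a (m+1)) (a m), f s
        ≤ ∫ s in Ioc (a (m+1)) (a m), Real.exp 1 * (Real.exp (-(2^m : ℝ) * s) * f s) := step1
      _ = Real.exp 1 * ∫ s in Ioc (a (m+1)) (a m), Real.exp (-(2^m : ℝ) * s) * f s := by
          rw [integral_const_mul]
      _ ≤ Real.exp 1 * (C / 2^m) := by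
          apply mul_le_mul_of_nonneg_left (le_trans step2 step3) (Real.exp_pos _).le
  -- lintegral piece bound
  set r : ℝ := (Real.sqrt 2)⁻¹ with hrdef
  have hsqrt2_pos : (0:ℝ) < Real.sqrt 2 := Real.sqrt_pos.2 (by norm_num)
  have hsqrt2_gt1 : (1:ℝ) < Real.sqrt 2 := by
    have : Real.sqrt 1 < Real.sqrt 2 := Real.sqrt_lt_sqrt (by norm_num) (by norm_num)
    simpa using this
  have hr0 : 0 < r := by positivity
  have hr1 : r < 1 := by
    rw [hrdef, inv_lt_one_iff₀]; right; exact hsqrt2_gt1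
  set E : ℝ := Real.exp 1 * C * Real.sqrt 2 with hE
  have hE0 : 0 ≤ E := by positivity
  have hsqa : ∀ m : ℕ, Real.sqrt (a m) = ((Real.sqrt 2)^m)⁻¹ := by
    intro m
    rw [ha]
    simp only
    rw [Real.sqrt_inv, sqrt_two_pow]
  have hlpiece : ∀ k : ℕ, ∫⁻ s in P k, ENNReal.ofReal ((Real.sqrt s)⁻¹ * f s)
      ≤ ENNReal.ofReal (E * r^N * r^k) := by
    intro k
    set m : ℕ := N + k with hm
    have hptw : ∀ s ∈ P k, (Real.sqrt s)⁻¹ * f s ≤ (Real.sqrt 2)^(m+1) * f s := by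
      intro s hs
      have hs1 : a (m+1) < s := hs.1
      have hsqs : ((Real.sqrt 2)^(m+1))⁻¹ ≤ Real.sqrt s := by
        rw [← hsqa (m+1)]
        exact Real.sqrt_le_sqrt hs1.le
      have h1 : (Real.sqrt s)⁻¹ ≤ (Real.sqrt 2)^(m+1) := by
        rw [← inv_inv ((Real.sqrt 2)^(m+1))]
        apply inv_anti₀ (by positivity) hsqs
      exact mul_le_mul_of_nonneg_right h1 (hnn s)
    have hfim : IntegrableOn f (P k) volume := hint.mono_set (hPsub k)
    calc ∫⁻ s in P k, ENNReal.ofReal ((Real.sqrt s)⁻¹ * f s)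
        ≤ ∫⁻ s in P k, ENNReal.ofReal ((Real.sqrt 2)^(m+1) * f s) := by
          apply lintegral_mono_ae
          filter_upwards [ae_restrict_mem (hPmeas k)] with s hs
          exact ENNReal.ofReal_le_ofReal (hptw s hs)
      _ = ENNReal.ofReal ((Real.sqrt 2)^(m+1)) * ∫⁻ s in P k, ENNReal.ofReal (f s) := by
          rw [← lintegral_const_mul' _ _ ENNReal.ofReal_ne_top]
          congr 1
          ext s
          rw [← ENNReal.ofReal_mul (by positivity)]
      _ ≤ ENNReal.ofReal ((Real.sqrt 2)^(m+1)) * ENNReal.ofReal (Real.exp 1 * (C / 2^m)) := by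
          apply mul_le_mul_right _ _
          rw [← ofReal_integral_eq_lintegral_ofReal hfim
            (by filter_upwards with s using hnn s)]
          exact ENNReal.ofReal_le_ofReal (hpiece m)
      _ = ENNReal.ofReal ((Real.sqrt 2)^(m+1) * (Real.exp 1 * (C / 2^m))) := by
          rw [← ENNReal.ofReal_mul (by positivity)]
      _ = ENNReal.ofReal (E * r^N * r^k) := by
          congr 1
          have h2m : ((2:ℝ)^m) = (Real.sqrt 2)^m * (Real.sqrt 2)^m := by
            rw [← mul_pow, Real.mul_self_sqrt (by norm_num)]
          rw [hE, hrdef, inv_pow, inv_pow, h2m, hm]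
          have hne : (Real.sqrt 2) ≠ 0 := by positivity
          field_simp
          ring
  -- total lintegral bound
  have hlint : ∫⁻ s in Ioc (0:ℝ) (a N), ENNReal.ofReal ((Real.sqrt s)⁻¹ * f s)
      ≤ ENNReal.ofReal (E * r^N) * (1 - ENNReal.ofReal r)⁻¹ := by
    rw [← hU, lintegral_iUnion hPmeas hdisj]
    calc ∑' k, ∫⁻ s in P k, ENNReal.ofReal ((Real.sqrt s)⁻¹ * f s)
        ≤ ∑' k, ENNReal.ofReal (E * r^N * r^k) := ENNReal.tsum_le_tsum hlpiece
      _ = ∑' k, ENNReal.ofReal (E * r^N) * (ENNReal.ofReal r)^k := by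
          congr 1; ext k
          rw [← ENNReal.ofReal_pow hr0.le, ← ENNReal.ofReal_mul (by positivity)]
      _ = ENNReal.ofReal (E * r^N) * ∑' k, (ENNReal.ofReal r)^k := ENNReal.tsum_mul_left
      _ = ENNReal.ofReal (E * r^N) * (1 - ENNReal.ofReal r)⁻¹ := by
          rw [ENNReal.tsum_geometric]
  have hrof1 : ENNReal.ofReal r < 1 := by
    rw [← ENNReal.ofReal_one]
    exact ENNReal.ofReal_lt_ofReal_iff_of_nonneg hr0.le |>.2 hr1
  have hsubne : (1 - ENNReal.ofReal r) ≠ 0 := by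
    simp only [ne_eq, tsub_eq_zero_iff_le, not_le]
    exact hrof1
  have hrhs_ne_top : ENNReal.ofReal (E * r^N) * (1 - ENNReal.ofReal r)⁻¹ ≠ ⊤ := by
    apply ENNReal.mul_ne_top ENNReal.ofReal_ne_top
    exact (ENNReal.inv_lt_top.2 (pos_iff_ne_zero.2 hsubne)).ne
  have hlint_lt_top : ∫⁻ s in Ioc (0:ℝ) (a N), ENNReal.ofReal ((Real.sqrt s)⁻¹ * f s) < ⊤ :=
    lt_of_le_of_lt hlint (lt_top_iff_ne_top.2 hrhs_ne_top)
  -- integrability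
  have hgmeas : Measurable (fun s : ℝ => (Real.sqrt s)⁻¹ * f s) :=
    (Real.continuous_sqrt.measurable.inv).mul hmeas
  have hgnn : ∀ s, 0 ≤ (Real.sqrt s)⁻¹ * f s := fun s =>
    mul_nonneg (inv_nonneg.2 (Real.sqrt_nonneg s)) (hnn s)
  have hInt : IntegrableOn (fun s => (Real.sqrt s)⁻¹ * f s) (Ioc 0 (a N)) volume := by
    constructor
    · exact hgmeas.aestronglyMeasurable
    · rw [HasFiniteIntegral]
      calc ∫⁻ s in Ioc (0:ℝ) (a N), ‖(Real.sqrt s)⁻¹ * f s‖₊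
          = ∫⁻ s in Ioc (0:ℝ) (a N), ENNReal.ofReal ((Real.sqrt s)⁻¹ * f s) := by
            congr 1; ext s
            rw [← ENNReal.ofReal_coe_nnreal, coe_nnnorm, Real.norm_of_nonneg (hgnn s)]
        _ < ⊤ := hlint_lt_top
  refine ⟨hInt, ?_⟩
  -- final real bound
  have heq : ∫ s in Ioc (0:ℝ) (a N), (Real.sqrt s)⁻¹ * f s
      = (∫⁻ s in Ioc (0:ℝ) (a N), ENNReal.ofReal ((Real.sqrt s)⁻¹ * f s)).toReal := by
    rw [integral_eq_lintegral_of_nonneg_ae (by filter_upwards with s using hgnn s)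
      hgmeas.aestronglyMeasurable]
  rw [heq]
  have htoReal : (ENNReal.ofReal (E * r^N) * (1 - ENNReal.ofReal r)⁻¹).toReal
      = (E * r^N) * (1 - r)⁻¹ := by
    rw [← ENNReal.ofReal_one, ← ENNReal.ofReal_sub _ hr0.le,
      ← ENNReal.ofReal_inv_of_pos (by linarith),
      ← ENNReal.ofReal_mul (by positivity),
      ENNReal.toReal_ofReal (mul_nonneg (by positivity) (inv_nonneg.2 (by linarith)))]
  calc (∫⁻ s in Ioc (0:ℝ) (a N), ENNReal.ofReal ((Real.sqrt s)⁻¹ * f s)).toReal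
      ≤ (ENNReal.ofReal (E * r^N) * (1 - ENNReal.ofReal r)⁻¹).toReal :=
        ENNReal.toReal_mono hrhs_ne_top hlint
    _ = (E * r^N) * (1 - r)⁻¹ := htoReal
    _ = (E * (1 - r)⁻¹) * r^N := by ring

set_option maxHeartbeats 1600000 in
/-- **Limit distribution of the time-changed Ornstein–Uhlenbeck process.**
Fix `θ > 0` and for each `t > 0` let `f t` be a probability density on `(0,∞)`, with
`𝔢(t,λ) = ∫₀^∞ e^{−λs} f t s ds`. Assume (i) for each `λ > 0`, `𝔢(t,λ) → 0` as
`t → ∞`; (ii) for each `λ ≥ 0`, `t ↦ 𝔢(t,λ)` is nonincreasing; (iii) there is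
`t₀ > 0` with `sup_{λ ≥ 0} λ·𝔢(t₀,λ) < ∞`. Then for all `x, y ∈ ℝ`,
`∫₀^∞ p(s,x,y) f t s ds → m(x)` as `t → ∞`. -/
theorem stmt10 (θ : ℝ) (hθ : 0 < θ)
    (f : ℝ → ℝ → ℝ)
    (hfmeas : ∀ t : ℝ, 0 < t → Measurable (f t))
    (hf0 : ∀ t s : ℝ, 0 < t → 0 ≤ f t s)
    (hf1 : ∀ t : ℝ, 0 < t → ∫ s in Set.Ioi (0:ℝ), f t s = 1)
    (h1 : ∀ lam : ℝ, 0 < lam →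
      Tendsto (fun t => ∫ s in Set.Ioi (0:ℝ), Real.exp (-lam * s) * f t s)
        atTop (nhds 0))
    (h2 : ∀ lam : ℝ, 0 ≤ lam → ∀ t₁ t₂ : ℝ, 0 < t₁ → t₁ ≤ t₂ →
      ∫ s in Set.Ioi (0:ℝ), Real.exp (-lam * s) * f t₂ s
        ≤ ∫ s in Set.Ioi (0:ℝ), Real.exp (-lam * s) * f t₁ s)
    (h3 : ∃ t₀ : ℝ, 0 < t₀ ∧ ∃ C : ℝ, ∀ lam : ℝ, 0 ≤ lam →
      lam * ∫ s in Set.Ioi (0:ℝ), Real.exp (-lam * s) * f t₀ s ≤ C) :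
    ∀ x y : ℝ,
      Tendsto (fun t => ∫ s in Set.Ioi (0:ℝ), ouKernel θ s x y * f t s)
        atTop (nhds (gauss x)) := by
  obtain ⟨t₀, ht₀, C, hC⟩ := h3
  have hC0 : 0 ≤ C := by simpa using hC 0 le_rfl
  intro x y
  have hgx : 0 ≤ gauss x := gauss_nonneg x
  set K : ℝ := (Real.sqrt (2 * Real.pi * (1 - Real.exp (-2 * θ))))⁻¹ with hK
  have hK0 : 0 ≤ K := by positivity
  set r : ℝ := (Real.sqrt 2)⁻¹ with hrdef
  have hsqrt2_gt1 : (1:ℝ) < Real.sqrt 2 := by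
    have : Real.sqrt 1 < Real.sqrt 2 := Real.sqrt_lt_sqrt (by norm_num) (by norm_num)
    simpa using this
  have hr0 : 0 < r := by positivity
  have hr1 : r < 1 := by rw [hrdef, inv_lt_one_iff₀]; right; exact hsqrt2_gt1
  set D : ℝ := (Real.exp 1 * C * Real.sqrt 2) * (1 - r)⁻¹ with hD
  have hD0 : 0 ≤ D := mul_nonneg (by positivity) (inv_nonneg.2 (by linarith))
  rw [Metric.tendsto_atTop]
  intro ε hε
  set B : ℝ := (K + gauss x) * D + 1 with hB
  have hBD : 0 ≤ (K + gauss x) * D := mul_nonneg (by linarith) hD0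
  have hB0 : 0 < B := by linarith
  obtain ⟨N, hN⟩ := exists_pow_lt_of_lt_one (x := ε / 2 / B) (by positivity) hr1
  set δ : ℝ := ((2:ℝ)^N)⁻¹ with hδ
  have hδ0 : 0 < δ := by positivity
  have hδ1 : δ ≤ 1 := by
    rw [hδ]; exact inv_le_one_of_one_le₀ (one_le_pow₀ one_le_two)
  obtain ⟨L, hL0, hLip⟩ := ou_lip θ x y δ hθ hδ0
  have hLpos : (0:ℝ) < 2 * (L + 1) := by linarith
  obtain ⟨T₁, hT₁⟩ := Metric.tendsto_atTop.1 (h1 θ hθ) (ε / (2 * (L + 1))) (by positivity)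
  refine ⟨max T₁ (max t₀ 1), fun t ht => ?_⟩
  have htT₁ : T₁ ≤ t := le_trans (le_max_left _ _) ht
  have htt₀ : t₀ ≤ t := le_trans (le_trans (le_max_left _ _) (le_max_right _ _)) ht
  have ht1 : (1:ℝ) ≤ t := le_trans (le_trans (le_max_right _ _) (le_max_right _ _)) ht
  have htpos : 0 < t := lt_of_lt_of_le one_pos ht1
  have hfm := hfmeas t htpos
  have hfnn : ∀ s, 0 ≤ f t s := fun s => hf0 t s htpos
  have hfInt : IntegrableOn (f t) (Ioi 0) volume := by
    by_contra h
    have h0 : (1:ℝ) = 0 := by rw [← hf1 t htpos, integral_undef h]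
    norm_num at h0
  have hmass : ∀ lam : ℝ, 0 < lam →
      ∫ s in Ioi (0:ℝ), Real.exp (-lam * s) * f t s ≤ C / lam := by
    intro lam hlam
    have h2' := h2 lam hlam.le t₀ t ht₀ htt₀
    have h3' := hC lam hlam.le
    have hstep : ∫ s in Ioi (0:ℝ), Real.exp (-lam * s) * f t₀ s ≤ C / lam := by
      rw [le_div_iff₀ hlam]
      linarith
    linarith
  obtain ⟨hSInt, hSle⟩ := dyadic_bound (f t) hfm hfnn hfInt C hC0 hmass N
  rw [← hrdef, ← hD, ← hδ] at hSle
  rw [← hδ] at hSInt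
  -- pointwise bounds
  have hpm_small : ∀ s ∈ Ioc (0:ℝ) δ,
      |ouKernel θ s x y - gauss x| ≤ (K + gauss x) * (Real.sqrt s)⁻¹ := by
    intro s hs
    have hs0 : 0 < s := hs.1
    have hs1 : s ≤ 1 := le_trans hs.2 hδ1
    have hb : ouKernel θ s x y ≤ K * (Real.sqrt s)⁻¹ := ouKernel_le_small hθ hs0 hs1
    have hsq1 : Real.sqrt s ≤ 1 := Real.sqrt_le_one.2 hs1
    have hinv1 : (1:ℝ) ≤ (Real.sqrt s)⁻¹ := by
      simpa using inv_anti₀ (Real.sqrt_pos.2 hs0) hsq1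
    calc |ouKernel θ s x y - gauss x| ≤ |ouKernel θ s x y| + |gauss x| := abs_sub _ _
      _ = ouKernel θ s x y + gauss x := by
          rw [abs_of_nonneg (ouKernel_nonneg _ _ _ _), abs_of_nonneg hgx]
      _ ≤ K * (Real.sqrt s)⁻¹ + gauss x * (Real.sqrt s)⁻¹ := by nlinarith
      _ = (K + gauss x) * (Real.sqrt s)⁻¹ := by ring
  -- integrability pieces
  have hpfmeas : AEStronglyMeasurable (fun s => ouKernel θ s x y * f t s)
      (volume.restrict (Ioi (0:ℝ))) :=
    ((ouKernel_measurable θ x y).mul hfm).aestronglyMeasurable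
  have hIntSmall : IntegrableOn (fun s => ouKernel θ s x y * f t s) (Ioc 0 δ) volume := by
    apply Integrable.mono (hSInt.const_mul K)
      (((ouKernel_measurable θ x y).mul hfm).aestronglyMeasurable)
    filter_upwards [ae_restrict_mem measurableSet_Ioc] with s hs
    have hs0 : 0 < s := hs.1
    have hb : ouKernel θ s x y ≤ K * (Real.sqrt s)⁻¹ :=
      ouKernel_le_small hθ hs0 (le_trans hs.2 hδ1)
    simp only [Pi.mul_apply]
    rw [Real.norm_eq_abs, Real.norm_eq_abs,
      abs_of_nonneg (mul_nonneg (ouKernel_nonneg _ _ _ _) (hfnn s)),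
      abs_of_nonneg (mul_nonneg hK0 (mul_nonneg (inv_nonneg.2 (Real.sqrt_nonneg s)) (hfnn s)))]
    calc ouKernel θ s x y * f t s ≤ (K * (Real.sqrt s)⁻¹) * f t s :=
          mul_le_mul_of_nonneg_right hb (hfnn s)
      _ = K * ((Real.sqrt s)⁻¹ * f t s) := by ring
  have hIntLarge : IntegrableOn (fun s => ouKernel θ s x y * f t s) (Ioi δ) volume := by
    apply Integrable.mono ((hfInt.mono_set (Ioi_subset_Ioi hδ0.le)).const_mul (gauss x + L))
      (((ouKernel_measurable θ x y).mul hfm).aestronglyMeasurable)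
    filter_upwards [ae_restrict_mem measurableSet_Ioi] with s hs
    have hsδ : δ ≤ s := le_of_lt hs
    have hexp1 : Real.exp (-θ * s) ≤ 1 := Real.exp_le_one_iff.2 (by nlinarith [lt_of_lt_of_le hδ0 hsδ])
    have hp : ouKernel θ s x y ≤ gauss x + L := by
      have h1' := hLip s hsδ
      have h2' : ouKernel θ s x y - gauss x ≤ L * Real.exp (-θ * s) :=
        le_trans (le_abs_self _) h1'
      nlinarith
    simp only [Pi.mul_apply]
    rw [Real.norm_eq_abs, Real.norm_eq_abs,
      abs_of_nonneg (mul_nonneg (ouKernel_nonneg _ _ _ _) (hfnn s)),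
      abs_of_nonneg (mul_nonneg (by linarith) (hfnn s))]
    exact mul_le_mul_of_nonneg_right hp (hfnn s)
  have hUnionEq : Ioc (0:ℝ) δ ∪ Ioi δ = Ioi (0:ℝ) := Set.Ioc_union_Ioi_eq_Ioi hδ0.le
  have hIntP : IntegrableOn (fun s => ouKernel θ s x y * f t s) (Ioi 0) volume := by
    rw [← hUnionEq]; exact hIntSmall.union hIntLarge
  have hEmeas : Measurable fun s : ℝ => Real.exp (-θ * s) * f t s := by
    have hm1 : Measurable fun s : ℝ => -θ * s := by fun_prop
    exact (Real.measurable_exp.comp hm1).mul hfm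
  have hIntE : IntegrableOn (fun s => Real.exp (-θ * s) * f t s) (Ioi 0) volume := by
    apply Integrable.mono hfInt hEmeas.aestronglyMeasurable
    filter_upwards [ae_restrict_mem measurableSet_Ioi] with s hs
    have hs0 : (0:ℝ) < s := hs
    have hexp1 : Real.exp (-θ * s) ≤ 1 := Real.exp_le_one_iff.2 (by nlinarith)
    rw [Real.norm_eq_abs, Real.norm_eq_abs,
      abs_of_nonneg (mul_nonneg (Real.exp_pos _).le (hfnn s)), abs_of_nonneg (hfnn s)]
    nlinarith [hfnn s, Real.exp_pos (-θ * s)]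
  have hIntmf : IntegrableOn (fun s => gauss x * f t s) (Ioi 0) volume := hfInt.const_mul _
  have hIntPM : IntegrableOn (fun s => (ouKernel θ s x y - gauss x) * f t s) (Ioi 0) volume := by
    have : (fun s => (ouKernel θ s x y - gauss x) * f t s)
        = fun s => ouKernel θ s x y * f t s - gauss x * f t s := by
      funext s; ring
    rw [this]; exact hIntP.sub hIntmf
  have hIntPMabs : IntegrableOn (fun s => |(ouKernel θ s x y - gauss x) * f t s|)
      (Ioi 0) volume := hIntPM.abs
  have hIsub : ∫ s in Ioi (0:ℝ), (ouKernel θ s x y - gauss x) * f t s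
      = (∫ s in Ioi (0:ℝ), ouKernel θ s x y * f t s) - gauss x := by
    have heq : (fun s => (ouKernel θ s x y - gauss x) * f t s)
        = fun s => ouKernel θ s x y * f t s - gauss x * f t s := by
      funext s; ring
    rw [heq, integral_sub hIntP hIntmf, integral_const_mul, hf1 t htpos, mul_one]
  -- split
  have hsplit : ∫ s in Ioi (0:ℝ), |(ouKernel θ s x y - gauss x) * f t s|
      = (∫ s in Ioc (0:ℝ) δ, |(ouKernel θ s x y - gauss x) * f t s|)
        + ∫ s in Ioi δ, |(ouKernel θ s x y - gauss x) * f t s| := by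
    rw [← hUnionEq]
    exact setIntegral_union (Set.Ioc_disjoint_Ioi le_rfl) measurableSet_Ioi
      (hIntPMabs.mono_set (by rw [← hUnionEq]; exact subset_union_left))
      (hIntPMabs.mono_set (by rw [← hUnionEq]; exact subset_union_right))
  have hb1 : ∫ s in Ioc (0:ℝ) δ, |(ouKernel θ s x y - gauss x) * f t s|
      ≤ (K + gauss x) * (D * r^N) := by
    calc ∫ s in Ioc (0:ℝ) δ, |(ouKernel θ s x y - gauss x) * f t s|
        ≤ ∫ s in Ioc (0:ℝ) δ, (K + gauss x) * ((Real.sqrt s)⁻¹ * f t s) := by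
          apply setIntegral_mono_on
            (hIntPMabs.mono_set (by rw [← hUnionEq]; exact subset_union_left))
            (hSInt.const_mul _) measurableSet_Ioc
          intro s hs
          rw [abs_mul, abs_of_nonneg (hfnn s)]
          calc |ouKernel θ s x y - gauss x| * f t s
              ≤ ((K + gauss x) * (Real.sqrt s)⁻¹) * f t s :=
                mul_le_mul_of_nonneg_right (hpm_small s hs) (hfnn s)
            _ = (K + gauss x) * ((Real.sqrt s)⁻¹ * f t s) := by ring
      _ = (K + gauss x) * ∫ s in Ioc (0:ℝ) δ, (Real.sqrt s)⁻¹ * f t s := integral_const_mul _ _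
      _ ≤ (K + gauss x) * (D * r^N) := mul_le_mul_of_nonneg_left hSle (by linarith)
  have hEnn : 0 ≤ ∫ s in Ioi (0:ℝ), Real.exp (-θ * s) * f t s :=
    setIntegral_nonneg measurableSet_Ioi (fun s _ => mul_nonneg (Real.exp_pos _).le (hfnn s))
  have hElt : ∫ s in Ioi (0:ℝ), Real.exp (-θ * s) * f t s < ε / (2 * (L + 1)) := by
    have h' := hT₁ t htT₁
    rwa [Real.dist_eq, sub_zero, abs_of_nonneg hEnn] at h'
  have hb2 : ∫ s in Ioi δ, |(ouKernel θ s x y - gauss x) * f t s|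
      ≤ L * ∫ s in Ioi (0:ℝ), Real.exp (-θ * s) * f t s := by
    calc ∫ s in Ioi δ, |(ouKernel θ s x y - gauss x) * f t s|
        ≤ ∫ s in Ioi δ, L * (Real.exp (-θ * s) * f t s) := by
          apply setIntegral_mono_on
            (hIntPMabs.mono_set (by rw [← hUnionEq]; exact subset_union_right))
            ((hIntE.mono_set (Ioi_subset_Ioi hδ0.le)).const_mul L) measurableSet_Ioi
          intro s hs
          rw [abs_mul, abs_of_nonneg (hfnn s)]
          calc |ouKernel θ s x y - gauss x| * f t s
              ≤ (L * Real.exp (-θ * s)) * f t s :=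
                mul_le_mul_of_nonneg_right (hLip s (le_of_lt hs)) (hfnn s)
            _ = L * (Real.exp (-θ * s) * f t s) := by ring
      _ = L * ∫ s in Ioi δ, Real.exp (-θ * s) * f t s := integral_const_mul _ _
      _ ≤ L * ∫ s in Ioi (0:ℝ), Real.exp (-θ * s) * f t s := by
          apply mul_le_mul_of_nonneg_left _ hL0
          apply setIntegral_mono_set hIntE
          · filter_upwards with s using mul_nonneg (Real.exp_pos _).le (hfnn s)
          · exact HasSubset.Subset.eventuallyLE (Ioi_subset_Ioi hδ0.le)
  -- conclude
  rw [Real.dist_eq, ← hIsub]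
  have habs : |∫ s in Ioi (0:ℝ), (ouKernel θ s x y - gauss x) * f t s|
      ≤ ∫ s in Ioi (0:ℝ), |(ouKernel θ s x y - gauss x) * f t s| := by
    simpa only [Real.norm_eq_abs] using
      norm_integral_le_integral_norm (μ := volume.restrict (Ioi (0:ℝ)))
        (fun s => (ouKernel θ s x y - gauss x) * f t s)
  have hfirst : (K + gauss x) * (D * r^N) < ε / 2 := by
    have h1' : (K + gauss x) * (D * r^N) ≤ B * r^N := by
      have : (K + gauss x) * D ≤ B := by rw [hB]; linarith
      calc (K + gauss x) * (D * r^N) = ((K + gauss x) * D) * r^N := by ring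
        _ ≤ B * r^N := mul_le_mul_of_nonneg_right this (by positivity)
    have h2' : B * r^N < B * (ε / 2 / B) := mul_lt_mul_of_pos_left hN hB0
    have h3' : B * (ε / 2 / B) = ε / 2 := by field_simp
    calc (K + gauss x) * (D * r ^ N) ≤ B * r ^ N := h1'
      _ < B * (ε / 2 / B) := h2'
      _ = ε / 2 := h3'
  have hsecond : L * ∫ s in Ioi (0:ℝ), Real.exp (-θ * s) * f t s < ε / 2 := by
    have hL1 : L * ∫ s in Ioi (0:ℝ), Real.exp (-θ * s) * f t s
        ≤ (L + 1) * ∫ s in Ioi (0:ℝ), Real.exp (-θ * s) * f t s := by nlinarith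
    have h2' : (L + 1) * ∫ s in Ioi (0:ℝ), Real.exp (-θ * s) * f t s
        < (L + 1) * (ε / (2 * (L + 1))) := mul_lt_mul_of_pos_left hElt (by linarith)
    have h3' : (L + 1) * (ε / (2 * (L + 1))) = ε / 2 := by
      rw [eq_div_iff (by norm_num : (2:ℝ) ≠ 0)]
      field_simp
    calc L * ∫ s in Ioi (0:ℝ), Real.exp (-θ * s) * f t s
        ≤ (L + 1) * ∫ s in Ioi (0:ℝ), Real.exp (-θ * s) * f t s := hL1
      _ < (L + 1) * (ε / (2 * (L + 1))) := h2'
      _ = ε / 2 := h3'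
  calc |∫ s in Ioi (0:ℝ), (ouKernel θ s x y - gauss x) * f t s|
      ≤ ∫ s in Ioi (0:ℝ), |(ouKernel θ s x y - gauss x) * f t s| := habs
    _ = (∫ s in Ioc (0:ℝ) δ, |(ouKernel θ s x y - gauss x) * f t s|)
        + ∫ s in Ioi δ, |(ouKernel θ s x y - gauss x) * f t s| := hsplit
    _ ≤ (K + gauss x) * (D * r ^ N)
        + L * ∫ s in Ioi (0:ℝ), Real.exp (-θ * s) * f t s := add_le_add hb1 hb2
    _ < ε / 2 + ε / 2 := add_lt_add hfirst hsecond
    _ = ε := by ring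
end

section
/- Let ν̄ : (0,∞) → [0,∞) be nonincreasing with ∫₀^1 ν̄(s) ds < ∞. Let (λ_n)_{n≥0} be nonnegative reals, (c_n)_{n≥0} real numbers with Σ_{n≥0} |c_n| < ∞, and for each n let e_n : [0,∞) → [0,1] be continuous with e_n(0) = 1 such that for every t > 0 the function t ↦ ∫₀^t (e_n(τ) − 1) ν̄(t−τ) dτ is differentiable with derivative −λ_n e_n(t). Assume moreover that for every t₀ > 0, sup{λ_n e_n(t) : n ≥ 0, t ≥ t₀} < ∞. Then the function u(t) = Σ_{n≥0} c_n e_n(t) is well defined, and for every t > 0 the function t ↦ ∫₀^t (u(τ) − u(0)) ν̄(t−τ) dτ is differentiable with derivative −Σ_{n≥0} λ_n c_n e_n(t), that is, the non-local derivative ∂_t^Φ may be applied to the series term by term. -/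
set_option maxHeartbeats 1000000


open MeasureTheory Set

/-- **Termwise application of the non-local convolution derivative.**
Let `ν̄ : (0,∞) → [0,∞)` be nonincreasing with `∫₀^1 ν̄ < ∞`, let `λₙ ≥ 0`, let
`(cₙ)` be absolutely summable, and for each `n` let `eₙ : [0,∞) → [0,1]` be continuous
with `eₙ(0) = 1` and such that `t ↦ ∫₀^t (eₙ(τ) − 1) ν̄(t−τ) dτ` has derivative
`−λₙ eₙ(t)` at each `t > 0`; assume `sup {λₙ eₙ(t) : n, t ≥ t₀} < ∞` for each
`t₀ > 0`. Then `u(t) = Σₙ cₙ eₙ(t)` is well defined and for every `t > 0` the function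
`t ↦ ∫₀^t (u(τ) − u(0)) ν̄(t−τ) dτ` has derivative `−Σₙ λₙ cₙ eₙ(t)`, i.e. the
non-local derivative may be applied term by term. -/
theorem stmt11
    (nu : ℝ → ℝ) (hnu0 : ∀ s : ℝ, 0 < s → 0 ≤ nu s)
    (hnumono : AntitoneOn nu (Set.Ioi 0))
    (hnuint : IntegrableOn nu (Set.Ioc 0 1))
    (lam : ℕ → ℝ) (hlam : ∀ n, 0 ≤ lam n)
    (c : ℕ → ℝ) (hc : Summable fun n => |c n|)
    (e : ℕ → ℝ → ℝ)
    (hecont : ∀ n, ContinuousOn (e n) (Set.Ici 0))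
    (he01 : ∀ n, ∀ t : ℝ, 0 ≤ t → e n t ∈ Set.Icc (0:ℝ) 1)
    (he0 : ∀ n, e n 0 = 1)
    (hederiv : ∀ n, ∀ t : ℝ, 0 < t →
      HasDerivAt (fun r => ∫ τ in (0:ℝ)..r, (e n τ - 1) * nu (r - τ))
        (-(lam n) * e n t) t)
    (hunif : ∀ t₀ : ℝ, 0 < t₀ → ∃ C : ℝ, ∀ n, ∀ t : ℝ, t₀ ≤ t → lam n * e n t ≤ C) :
    (∀ t : ℝ, 0 ≤ t → Summable fun n => c n * e n t) ∧
    ∀ t : ℝ, 0 < t →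
      (Summable fun n => lam n * c n * e n t) ∧
      HasDerivAt
        (fun r => ∫ τ in (0:ℝ)..r,
          ((∑' n, c n * e n τ) - ∑' n, c n * e n 0) * nu (r - τ))
        (-∑' n, lam n * c n * e n t) t := by
  -- Part 1: summability of `c n * e n t` for `t ≥ 0`.
  have hsum1 : ∀ t : ℝ, 0 ≤ t → Summable fun n => c n * e n t := by
    intro t ht
    refine Summable.of_norm_bounded hc fun n => ?_
    have h1 := (he01 n t ht).1
    have h2 := (he01 n t ht).2
    rw [Real.norm_eq_abs, abs_mul]
    calc |c n| * |e n t| ≤ |c n| * 1 := by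
          apply mul_le_mul_of_nonneg_left _ (abs_nonneg _)
          rw [abs_le]; constructor <;> linarith
      _ = |c n| := mul_one _
  -- Integrability of `nu` on `Ioc 0 y` for all `y > 0`.
  have hnuIoc : ∀ y : ℝ, 0 < y → IntegrableOn nu (Ioc 0 y) := by
    intro y hy
    rcases le_or_gt y 1 with h | h
    · exact hnuint.mono_set (Ioc_subset_Ioc_right h)
    · have h1 : IntegrableOn nu (Icc 1 y) :=
        AntitoneOn.integrableOn_isCompact isCompact_Icc
          (hnumono.mono fun x hx => lt_of_lt_of_le one_pos hx.1)
      have hsub : Ioc 0 y ⊆ Ioc 0 1 ∪ Icc 1 y := by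
        intro x hx
        rcases le_or_gt x 1 with h' | h'
        · exact Or.inl ⟨hx.1, h'⟩
        · exact Or.inr ⟨h'.le, hx.2⟩
      exact (hnuint.union h1).mono_set hsub
  -- Integrability of `τ ↦ nu (y - τ)` on `Ioo 0 y`.
  have hcompI : ∀ y : ℝ, 0 < y → IntegrableOn (fun τ => nu (y - τ)) (Ioo 0 y) := by
    intro y hy
    have hII : IntervalIntegrable nu volume 0 y :=
      (intervalIntegrable_iff_integrableOn_Ioc_of_le hy.le).2 (hnuIoc y hy)
    have h2 := hII.comp_sub_left y
    rw [sub_zero, sub_self] at h2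
    exact ((intervalIntegrable_iff_integrableOn_Ioc_of_le hy.le).1 h2.symm).mono_set
      Ioo_subset_Ioc_self
  -- Integrability of the summands.
  have hfint : ∀ (y : ℝ), 0 < y → ∀ n,
      IntegrableOn (fun τ => (e n τ - 1) * nu (y - τ)) (Ioo 0 y) := by
    intro y hy n
    refine (hcompI y hy).mono' ?_ ?_
    · exact ((((hecont n).mono (fun x hx => le_of_lt hx.1)).aestronglyMeasurable
        measurableSet_Ioo).sub aestronglyMeasurable_const).mul
        (hcompI y hy).aestronglyMeasurable
    · refine (ae_restrict_iff' measurableSet_Ioo).2 (ae_of_all _ fun τ hτ => ?_)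
      have hnn : 0 ≤ nu (y - τ) := hnu0 _ (by linarith [hτ.2])
      have h1 := (he01 n τ hτ.1.le).1
      have h2 := (he01 n τ hτ.1.le).2
      show ‖(e n τ - 1) * nu (y - τ)‖ ≤ nu (y - τ)
      rw [Real.norm_eq_abs, abs_mul, abs_of_nonneg hnn]
      calc |e n τ - 1| * nu (y - τ) ≤ 1 * nu (y - τ) := by
            apply mul_le_mul_of_nonneg_right _ hnn
            rw [abs_le]; constructor <;> linarith
        _ = nu (y - τ) := one_mul _
  -- Norm bound for the indivdual convolution integrals.
  have hnormb : ∀ (y : ℝ), 0 < y → ∀ n,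
      (∫ τ in Ioo (0:ℝ) y, ‖(e n τ - 1) * nu (y - τ)‖)
        ≤ ∫ τ in Ioo (0:ℝ) y, nu (y - τ) := by
    intro y hy n
    refine integral_mono_of_nonneg (ae_of_all _ fun τ => norm_nonneg _) (hcompI y hy) ?_
    refine (ae_restrict_iff' measurableSet_Ioo).2 (ae_of_all _ fun τ hτ => ?_)
    have hnn : 0 ≤ nu (y - τ) := hnu0 _ (by linarith [hτ.2])
    have h1 := (he01 n τ hτ.1.le).1
    have h2 := (he01 n τ hτ.1.le).2
    show ‖(e n τ - 1) * nu (y - τ)‖ ≤ nu (y - τ)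
    rw [Real.norm_eq_abs, abs_mul, abs_of_nonneg hnn]
    calc |e n τ - 1| * nu (y - τ) ≤ 1 * nu (y - τ) := by
          apply mul_le_mul_of_nonneg_right _ hnn
          rw [abs_le]; constructor <;> linarith
      _ = nu (y - τ) := one_mul _
  -- The key identity: the convolution integral of the sum is the sum of the
  -- convolution integrals.
  have hkey : ∀ y : ℝ, 0 < y →
      (∫ τ in (0:ℝ)..y, ((∑' n, c n * e n τ) - ∑' n, c n * e n 0) * nu (y - τ))
        = ∑' n, c n * ∫ τ in (0:ℝ)..y, (e n τ - 1) * nu (y - τ) := by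
    intro y hy
    rw [intervalIntegral.integral_of_le hy.le, integral_Ioc_eq_integral_Ioo]
    have h1 : ∀ τ ∈ Ioo (0:ℝ) y,
        ((∑' n, c n * e n τ) - ∑' n, c n * e n 0) * nu (y - τ)
          = ∑' n, c n * ((e n τ - 1) * nu (y - τ)) := by
      intro τ hτ
      have hsτ : Summable fun n => c n * e n τ := hsum1 τ hτ.1.le
      have hs0 : Summable fun n => c n * e n 0 := hsum1 0 le_rfl
      rw [← Summable.tsum_sub hsτ hs0, ← tsum_mul_right]
      congr 1
      funext n
      rw [he0 n]; ring
    rw [setIntegral_congr_fun measurableSet_Ioo h1]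
    have hint' : ∀ n, Integrable (fun τ => c n * ((e n τ - 1) * nu (y - τ)))
        (volume.restrict (Ioo 0 y)) := fun n => (hfint y hy n).const_mul (c n)
    have hsumnorm : Summable fun n =>
        ∫ τ in Ioo (0:ℝ) y, ‖c n * ((e n τ - 1) * nu (y - τ))‖ := by
      refine Summable.of_nonneg_of_le
        (fun n => integral_nonneg fun τ => norm_nonneg _)
        (fun n => ?_) (hc.mul_right (∫ τ in Ioo (0:ℝ) y, nu (y - τ)))
      have : (fun τ => ‖c n * ((e n τ - 1) * nu (y - τ))‖)
          = fun τ => |c n| * ‖(e n τ - 1) * nu (y - τ)‖ := by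
        funext τ; rw [norm_mul, Real.norm_eq_abs]
      rw [this, MeasureTheory.integral_const_mul]
      exact mul_le_mul_of_nonneg_left (hnormb y hy n) (abs_nonneg _)
    rw [← integral_tsum_of_summable_integral_norm hint' hsumnorm]
    congr 1
    funext n
    rw [MeasureTheory.integral_const_mul, intervalIntegral.integral_of_le hy.le,
      integral_Ioc_eq_integral_Ioo]
  -- Summability of `c n * F n y` for `y > 0`.
  have hFsum : ∀ y : ℝ, 0 < y →
      Summable fun n => c n * ∫ τ in (0:ℝ)..y, (e n τ - 1) * nu (y - τ) := by
    intro y hy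
    refine Summable.of_norm_bounded (hc.mul_right (∫ τ in Ioo (0:ℝ) y, nu (y - τ)))
      fun n => ?_
    rw [Real.norm_eq_abs, abs_mul]
    refine mul_le_mul_of_nonneg_left ?_ (abs_nonneg _)
    rw [intervalIntegral.integral_of_le hy.le, integral_Ioc_eq_integral_Ioo]
    calc |∫ τ in Ioo (0:ℝ) y, (e n τ - 1) * nu (y - τ)|
        ≤ ∫ τ in Ioo (0:ℝ) y, ‖(e n τ - 1) * nu (y - τ)‖ := by
          rw [← Real.norm_eq_abs]
          exact norm_integral_le_integral_norm _
      _ ≤ ∫ τ in Ioo (0:ℝ) y, nu (y - τ) := hnormb y hy n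
  refine ⟨hsum1, fun t ht => ?_⟩
  -- Summability of `lam n * c n * e n t`.
  obtain ⟨C', hC'⟩ := hunif t ht
  have hsum2 : Summable fun n => lam n * c n * e n t := by
    refine Summable.of_norm_bounded (hc.mul_left C') fun n => ?_
    have h1 := (he01 n t ht.le).1
    have h2 := hC' n t le_rfl
    have h3 := hlam n
    rw [Real.norm_eq_abs, abs_mul, abs_mul, abs_of_nonneg h3, abs_of_nonneg h1]
    calc lam n * |c n| * e n t = lam n * e n t * |c n| := by ring
      _ ≤ C' * |c n| := mul_le_mul_of_nonneg_right h2 (abs_nonneg _)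
  refine ⟨hsum2, ?_⟩
  -- The termwise differentiation.
  obtain ⟨C, hC⟩ := hunif (t / 2) (half_pos ht)
  have hmain : HasDerivAt
      (fun z => ∑' n, c n * ∫ τ in (0:ℝ)..z, (e n τ - 1) * nu (z - τ))
      (∑' n, c n * (-(lam n) * e n t)) t := by
    refine hasDerivAt_tsum_of_isPreconnected (hc.mul_right C) isOpen_Ioi
      (isPreconnected_Ioi)
      (g := fun n z => c n * ∫ τ in (0:ℝ)..z, (e n τ - 1) * nu (z - τ))
      (g' := fun n y => c n * (-(lam n) * e n y))
      (fun n y hy => ?_) (fun n y hy => ?_) (mem_Ioi.2 (half_lt_self ht))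
      (hFsum t ht) (mem_Ioi.2 (half_lt_self ht))
    · exact (hederiv n y (lt_trans (half_pos ht) hy)).const_mul (c n)
    · have hy' : 0 < y := lt_trans (half_pos ht) hy
      have h1 := (he01 n y hy'.le).1
      have h2 := hC n y (le_of_lt hy)
      have h3 := hlam n
      rw [Real.norm_eq_abs, abs_mul]
      refine mul_le_mul_of_nonneg_left ?_ (abs_nonneg _)
      rw [abs_of_nonpos (by nlinarith : -(lam n) * e n y ≤ 0)]
      nlinarith
  have hval : (∑' n, c n * (-(lam n) * e n t)) = -∑' n, lam n * c n * e n t := by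
    rw [← tsum_neg]
    congr 1
    funext n
    ring
  rw [hval] at hmain
  refine hmain.congr_of_eventuallyEq ?_
  filter_upwards [isOpen_Ioi.mem_nhds (mem_Ioi.2 ht)] with y hy
  exact hkey y hy
end
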